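/- arXiv:1801.03216 — 9 statements merged into one kernel-verified Lean document; each statement's English description precedes it below -/
import Mathlib

section
/- Let ε ∈ (0,1) and let (u₁,u₂,u₃) be an ε-cycle for the sets (C₁,C₂,C₃) in ℝ³ with support (w₁,w₂,w₃). Then the six points u₁, u₂, u₃, w₁, w₂, w₃ all have the same third coordinate; i.e. they lie in a common plane orthogonal to the z-axis. -/
noncomputable section
open Real Filter

/-- ℝ³ with the Euclidean structure. -/
abbrev E3 : Type := EuclideanSpace ℝ (Fin 3)
/-- ℝ² with the Euclidean structure. -/
abbrev E2 : Type := EuclideanSpace ℝ (Fin 2)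

/-- The real inner product. -/
def ip {E : Type} [NormedAddCommGroup E] [InnerProductSpace ℝ E] (x y : E) : ℝ :=
  inner ℝ x y

/-- `w` is the metric projection of `u` onto `C`, characterised by membership
together with the variational inequality `⟪v - w, u - w⟫ ≤ 0` for all `v ∈ C`. -/
def IsProj {E : Type} [NormedAddCommGroup E] [InnerProductSpace ℝ E]
    (C : Set E) (u w : E) : Prop :=
  w ∈ C ∧ ∀ v ∈ C, inner ℝ (v - w) (u - w) ≤ (0 : ℝ)

/-- `(u₁,u₂,u₃)` is an ε-cycle for `(C₁,C₂,C₃)` with support `(w₁,w₂,w₃)`. -/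
def IsCycleWithSupport {E : Type} [NormedAddCommGroup E] [InnerProductSpace ℝ E]
    (C₁ C₂ C₃ : Set E) (ε : ℝ) (u₁ u₂ u₃ w₁ w₂ w₃ : E) : Prop :=
  IsProj C₁ u₃ w₁ ∧ IsProj C₂ u₁ w₂ ∧ IsProj C₃ u₂ w₃ ∧
    u₁ = u₃ + ε • (w₁ - u₃) ∧ u₂ = u₁ + ε • (w₂ - u₁) ∧ u₃ = u₂ + ε • (w₃ - u₂)

/-- `(u₁,u₂,u₃)` is an ε-cycle for `(C₁,C₂,C₃)`. -/
def IsCycle {E : Type} [NormedAddCommGroup E] [InnerProductSpace ℝ E]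
    (C₁ C₂ C₃ : Set E) (ε : ℝ) (u₁ u₂ u₃ : E) : Prop :=
  ∃ w₁ w₂ w₃ : E, IsCycleWithSupport C₁ C₂ C₃ ε u₁ u₂ u₃ w₁ w₂ w₃

/-- An admissible sequence: strictly increasing (on indices `k ≥ 1`), starting
at `t₁ = π/4` and converging to `π/2`. -/
def Admissible (t : ℕ → ℝ) : Prop :=
  StrictMonoOn t (Set.Ici 1) ∧ t 1 = π / 4 ∧ Tendsto t atTop (nhds (π / 2))

/-- The segment C₁ = co{(−2,2,1), (−2,2,−1)}. -/
def C1 : Set E3 := convexHull ℝ {WithLp.toLp 2 ![(-2 : ℝ), 2, 1], WithLp.toLp 2 ![(-2 : ℝ), 2, -1]}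

/-- The segment C₂ = co{(2,2,1), (2,2,−1)}. -/
def C2 : Set E3 := convexHull ℝ {WithLp.toLp 2 ![(2 : ℝ), 2, 1], WithLp.toLp 2 ![(2 : ℝ), 2, -1]}

/-- The points pₖ = (cos tₖ, sin tₖ, (−1)ᵏ). -/
def pSeq (t : ℕ → ℝ) (k : ℕ) : E3 := WithLp.toLp 2 ![Real.cos (t k), Real.sin (t k), (-1 : ℝ) ^ k]

/-- C₃ = closed convex hull of {pₖ : k ≥ 1}. -/
def C3 (t : ℕ → ℝ) : Set E3 := closure (convexHull ℝ (pSeq t '' {k | 1 ≤ k}))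

/-- a = (−2,2). -/
def aPt : E2 := WithLp.toLp 2 ![(-2 : ℝ), 2]
/-- b = (2,2). -/
def bPt : E2 := WithLp.toLp 2 ![(2 : ℝ), 2]
/-- vₖ = (cos tₖ, sin tₖ). -/
def vSeq (t : ℕ → ℝ) (k : ℕ) : E2 := WithLp.toLp 2 ![Real.cos (t k), Real.sin (t k)]
/-- C₁' = {a}. -/
def C1' : Set E2 := {aPt}
/-- C₂' = {b}. -/
def C2' : Set E2 := {bPt}
/-- C₃' = closed convex hull of {vₖ : k ≥ 1}. -/
def C3' (t : ℕ → ℝ) : Set E2 := closure (convexHull ℝ (vSeq t '' {k | 1 ≤ k}))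

/-- Projection of ℝ³ onto the xy-plane. -/
def projXY (x : E3) : E2 := WithLp.toLp 2 ![x 0, x 1]

/-- Lifting a point of the xy-plane to height `z`. -/
def liftZ (p : E2) (z : ℝ) : E3 := WithLp.toLp 2 ![p 0, p 1, z]

/-- The solid cylinder D. -/
def Dcyl : Set E3 := {x | x 0 ^ 2 + x 1 ^ 2 ≤ 1 ∧ |x 2| ≤ 1}

lemma memC1seg (x : E3) (hx : x ∈ C1) : x 0 = -2 ∧ x 1 = 2 ∧ -1 ≤ x 2 ∧ x 2 ≤ 1 := by
  rw [C1, convexHull_pair] at hx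
  obtain ⟨a, b, ha, hb, hab, hx⟩ := hx
  subst hx
  refine ⟨?_, ?_, ?_, ?_⟩ <;>
    simp [PiLp.add_apply, PiLp.smul_apply, smul_eq_mul] <;> nlinarith

lemma memC1lift (s : ℝ) (hs1 : -1 ≤ s) (hs2 : s ≤ 1) : (WithLp.toLp 2 ![(-2:ℝ),2,s] : E3) ∈ C1 := by
  rw [C1, convexHull_pair]
  refine ⟨(1+s)/2, (1-s)/2, by linarith, by linarith, by ring, ?_⟩
  ext i
  fin_cases i <;> simp [PiLp.add_apply, PiLp.smul_apply, smul_eq_mul] <;> ring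

lemma memC2seg (x : E3) (hx : x ∈ C2) : x 0 = 2 ∧ x 1 = 2 ∧ -1 ≤ x 2 ∧ x 2 ≤ 1 := by
  rw [C2, convexHull_pair] at hx
  obtain ⟨a, b, ha, hb, hab, hx⟩ := hx
  subst hx
  refine ⟨?_, ?_, ?_, ?_⟩ <;>
    simp [PiLp.add_apply, PiLp.smul_apply, smul_eq_mul] <;> nlinarith

lemma memC2lift (s : ℝ) (hs1 : -1 ≤ s) (hs2 : s ≤ 1) : (WithLp.toLp 2 ![(2:ℝ),2,s] : E3) ∈ C2 := by
  rw [C2, convexHull_pair]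
  refine ⟨(1+s)/2, (1-s)/2, by linarith, by linarith, by ring, ?_⟩
  ext i
  fin_cases i <;> simp [PiLp.add_apply, PiLp.smul_apply, smul_eq_mul] <;> ring

lemma memC3z (t : ℕ → ℝ) (x : E3) (hx : x ∈ C3 t) : -1 ≤ x 2 ∧ x 2 ≤ 1 := by
  have hK : C3 t ⊆ {y : E3 | y 2 ∈ Set.Icc (-1 : ℝ) 1} := by
    apply closure_minimal
    · apply convexHull_min
      · rintro y ⟨k, -, rfl⟩
        simp only [pSeq, Set.mem_setOf_eq]
        rcases Nat.even_or_odd k with hk | hk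
        · simp [hk.neg_one_pow]
        · simp [hk.neg_one_pow]
      · intro y hy z hz a b ha hb hab
        have : (a • y + b • z) 2 = a * y 2 + b * z 2 := by
          simp [PiLp.add_apply, PiLp.smul_apply, smul_eq_mul]
        simp only [Set.mem_setOf_eq, this]
        exact (convex_Icc (-1 : ℝ) 1) hy hz ha hb hab
    · have : {y : E3 | y 2 ∈ Set.Icc (-1 : ℝ) 1}
          = (EuclideanSpace.proj (2 : Fin 3) : E3 →L[ℝ] ℝ) ⁻¹' Set.Icc (-1) 1 := by
        rfl
      rw [this]
      exact (isClosed_Icc).preimage (EuclideanSpace.proj (2 : Fin 3)).continuous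
  exact ⟨(hK hx).1, (hK hx).2⟩

lemma coordEq (u v w : E3) (ε : ℝ) (h : u = v + ε • (w - v)) (i : Fin 3) :
    u i = v i + ε * (w i - v i) := by
  have := congrArg (fun x : E3 => x i) h
  simpa [PiLp.add_apply, PiLp.smul_apply, PiLp.sub_apply, smul_eq_mul] using this

set_option maxHeartbeats 1000000 in
theorem stmt2 (t : ℕ → ℝ) (ht : Admissible t) (ε : ℝ) (hε : ε ∈ Set.Ioo (0 : ℝ) 1)
    (u₁ u₂ u₃ w₁ w₂ w₃ : E3)
    (hc : IsCycleWithSupport C1 C2 (C3 t) ε u₁ u₂ u₃ w₁ w₂ w₃) :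
    u₁ 2 = u₂ 2 ∧ u₂ 2 = u₃ 2 ∧ u₃ 2 = w₁ 2 ∧ w₁ 2 = w₂ 2 ∧ w₂ 2 = w₃ 2 := by
  obtain ⟨⟨hw1m, hw1v⟩, ⟨hw2m, hw2v⟩, ⟨hw3m, hw3v⟩, e1, e2, e3⟩ := hc
  obtain ⟨hε0, hε1⟩ := hε
  obtain ⟨hw10, hw11, hw1l, hw1u⟩ := memC1seg w₁ hw1m
  obtain ⟨hw20, hw21, hw2l, hw2u⟩ := memC2seg w₂ hw2m
  obtain ⟨hw3l, hw3u⟩ := memC3z t w₃ hw3m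
  have z1 : u₁ 2 = u₃ 2 + ε * (w₁ 2 - u₃ 2) := coordEq _ _ _ _ e1 2
  have z2 : u₂ 2 = u₁ 2 + ε * (w₂ 2 - u₁ 2) := coordEq _ _ _ _ e2 2
  have z3 : u₃ 2 = u₂ 2 + ε * (w₃ 2 - u₂ 2) := coordEq _ _ _ _ e3 2
  clear hw1m hw2m hw3m hw3v e1 e2 e3 ht
  -- bound on u₃ 2
  have hr : (0:ℝ) ≤ 1 - ε := by linarith
  have hc3 : (1-ε)^3 < 1 := pow_lt_one₀ hr (by linarith) (by norm_num)
  have s1 : u₁ 2 ≤ (1-ε) * u₃ 2 + ε := by clear hw1v hw2v; nlinarith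
  have s2 : u₂ 2 ≤ (1-ε) * u₁ 2 + ε := by clear hw1v hw2v; nlinarith
  have s3 : u₃ 2 ≤ (1-ε) * u₂ 2 + ε := by clear hw1v hw2v; nlinarith
  have s1' : (1-ε) * u₃ 2 - ε ≤ u₁ 2 := by clear hw1v hw2v; nlinarith
  have s2' : (1-ε) * u₁ 2 - ε ≤ u₂ 2 := by clear hw1v hw2v; nlinarith
  have s3' : (1-ε) * u₂ 2 - ε ≤ u₃ 2 := by clear hw1v hw2v; nlinarith
  have m2 := mul_le_mul_of_nonneg_left s2 hr
  have m1 := mul_le_mul_of_nonneg_left (mul_le_mul_of_nonneg_left s1 hr) hr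
  have m2' := mul_le_mul_of_nonneg_left s2' hr
  have m1' := mul_le_mul_of_nonneg_left (mul_le_mul_of_nonneg_left s1' hr) hr
  have hb3u : u₃ 2 ≤ 1 := by clear hw1v hw2v; nlinarith [s3, m2, m1]
  have hb3l : -1 ≤ u₃ 2 := by clear hw1v hw2v; nlinarith [s3', m2', m1']
  -- projection onto C1 forces w₁ 2 = u₃ 2
  have hv1 := hw1v _ (memC1lift (u₃ 2) hb3l hb3u)
  simp only [PiLp.inner_apply, Fin.sum_univ_three, PiLp.sub_apply, RCLike.inner_apply,
    starRingEnd_apply, star_trivial, Matrix.cons_val_zero, Matrix.cons_val_one,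
    Matrix.head_cons, Matrix.cons_val_two, Matrix.tail_cons, hw10, hw11] at hv1
  have hq1 : w₁ 2 = u₃ 2 := by clear hw1v hw2v; nlinarith [hv1, sq_nonneg (u₃ 2 - w₁ 2)]
  have hu13 : u₁ 2 = u₃ 2 := by rw [z1, hq1]; ring
  -- projection onto C2 forces w₂ 2 = u₁ 2
  have hb1u : u₁ 2 ≤ 1 := by rw [hu13]; exact hb3u
  have hb1l : -1 ≤ u₁ 2 := by rw [hu13]; exact hb3l
  have hv2 := hw2v _ (memC2lift (u₁ 2) hb1l hb1u)
  simp only [PiLp.inner_apply, Fin.sum_univ_three, PiLp.sub_apply, RCLike.inner_apply,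
    starRingEnd_apply, star_trivial, Matrix.cons_val_zero, Matrix.cons_val_one,
    Matrix.head_cons, Matrix.cons_val_two, Matrix.tail_cons, hw20, hw21] at hv2
  have hq2 : w₂ 2 = u₁ 2 := by clear hw1v hw2v; nlinarith [hv2, sq_nonneg (u₁ 2 - w₂ 2)]
  have hu21 : u₂ 2 = u₁ 2 := by rw [z2, hq2]; ring
  have hq3 : w₃ 2 = u₂ 2 := by
    have h32 : u₃ 2 = u₂ 2 := by rw [hu21, hu13]
    clear hw1v hw2v
    nlinarith
  refine ⟨by rw [hu21], by rw [hu21, hu13], by rw [hq1], ?_, ?_⟩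
  · rw [hq1, hq2, hu13]
  · rw [hq2, hq3, hu21]
end
end

section
/- Let ε ∈ (0,1) and let (u₁,u₂,u₃) be an ε-cycle for the sets (C₁,C₂,C₃) in ℝ³ with support (w₁,w₂,w₃). Writing x' ∈ ℝ² for the vector of the first two coordinates of x ∈ ℝ³, the triple (u₁',u₂',u₃') is an ε-cycle for the projected sets (C₁',C₂',C₃') in ℝ² with support (w₁',w₂',w₃'). -/
noncomputable section
open Real Filter

section Aux

/-- projXY as a linear map. -/
def projL : E3 →ₗ[ℝ] E2 where
  toFun := projXY
  map_add' x y := by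
    ext i
    fin_cases i <;> simp [projXY, PiLp.add_apply]
  map_smul' c x := by
    ext i
    fin_cases i <;> simp [projXY, PiLp.smul_apply]

/-- projXY as a continuous linear map. -/
def projCLM : E3 →L[ℝ] E2 := LinearMap.toContinuousLinearMap projL

lemma projCLM_coe : ⇑projCLM = projXY := rfl

lemma projXY_comb (c : ℝ) (u w : E3) :
    projXY (u + c • (w - u)) = projXY u + c • (projXY w - projXY u) := by
  rw [← projCLM_coe, map_add, map_smul, map_sub]

lemma image_closure_convexHull (f : E3 →L[ℝ] E2) (s : Set E3) :
    ⇑f '' closure (convexHull ℝ s) ⊆ closure (convexHull ℝ (⇑f '' s)) := by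
  rw [Set.image_subset_iff]
  refine closure_minimal ?_ (isClosed_closure.preimage f.continuous)
  intro x hx
  have hlin : IsLinearMap ℝ (⇑f) := ⟨map_add f, map_smul f⟩
  have : f x ∈ convexHull ℝ (⇑f '' s) := by
    rw [← hlin.image_convexHull]
    exact Set.mem_image_of_mem _ hx
  exact subset_closure this

lemma mem_C1 {x : E3} (hx : x ∈ C1) : x 0 = -2 ∧ x 1 = 2 ∧ |x 2| ≤ 1 := by
  rw [C1, convexHull_pair] at hx
  obtain ⟨a, b, ha, hb, hab, hx⟩ := hx
  have h0 := congrArg (fun y : E3 => y 0) hx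
  have h1 := congrArg (fun y : E3 => y 1) hx
  have h2 := congrArg (fun y : E3 => y 2) hx
  simp [PiLp.add_apply, PiLp.smul_apply] at h0 h1 h2
  refine ⟨by linarith, by linarith, ?_⟩
  rw [abs_le]; constructor <;> nlinarith

lemma mem_C2 {x : E3} (hx : x ∈ C2) : x 0 = 2 ∧ x 1 = 2 ∧ |x 2| ≤ 1 := by
  rw [C2, convexHull_pair] at hx
  obtain ⟨a, b, ha, hb, hab, hx⟩ := hx
  have h0 := congrArg (fun y : E3 => y 0) hx
  have h1 := congrArg (fun y : E3 => y 1) hx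
  have h2 := congrArg (fun y : E3 => y 2) hx
  simp [PiLp.add_apply, PiLp.smul_apply] at h0 h1 h2
  refine ⟨by linarith, by linarith, ?_⟩
  rw [abs_le]; constructor <;> nlinarith

lemma mem_C3_abs {t : ℕ → ℝ} {x : E3} (hx : x ∈ C3 t) : |x 2| ≤ 1 := by
  have hconv : Convex ℝ {y : E3 | |y 2| ≤ 1} := by
    intro p hp q hq a b ha hb hab
    simp only [Set.mem_setOf_eq] at hp hq ⊢
    have : (a • p + b • q) 2 = a * p 2 + b * q 2 := by
      simp [PiLp.add_apply, PiLp.smul_apply]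
    rw [this]
    calc |a * p 2 + b * q 2| ≤ |a * p 2| + |b * q 2| := abs_add_le _ _
      _ = a * |p 2| + b * |q 2| := by rw [abs_mul, abs_mul, abs_of_nonneg ha, abs_of_nonneg hb]
      _ ≤ a * 1 + b * 1 := by
          gcongr
      _ = 1 := by linarith
  have hclosed : IsClosed {y : E3 | |y 2| ≤ 1} := by
    have hc : Continuous fun y : E3 => |y 2| :=
      ((EuclideanSpace.proj (2 : Fin 3) : E3 →L[ℝ] ℝ).continuous).abs
    exact isClosed_le hc continuous_const
  have hsub : pSeq t '' {k | 1 ≤ k} ⊆ {y : E3 | |y 2| ≤ 1} := by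
    rintro y ⟨k, -, rfl⟩
    simp only [Set.mem_setOf_eq, pSeq]
    simp [abs_pow]
  exact closure_minimal (convexHull_min hsub hconv) hclosed hx

lemma mem_C1_of_z {z : ℝ} (hz : |z| ≤ 1) : (WithLp.toLp 2 ![(-2 : ℝ), 2, z] : E3) ∈ C1 := by
  rw [C1, convexHull_pair]
  rw [abs_le] at hz
  refine ⟨(1 + z) / 2, (1 - z) / 2, by linarith, by linarith, by ring, ?_⟩
  ext i
  fin_cases i <;> simp [PiLp.add_apply, PiLp.smul_apply] <;> ring

lemma mem_C2_of_z {z : ℝ} (hz : |z| ≤ 1) : (WithLp.toLp 2 ![(2 : ℝ), 2, z] : E3) ∈ C2 := by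
  rw [C2, convexHull_pair]
  rw [abs_le] at hz
  refine ⟨(1 + z) / 2, (1 - z) / 2, by linarith, by linarith, by ring, ?_⟩
  ext i
  fin_cases i <;> simp [PiLp.add_apply, PiLp.smul_apply] <;> ring

lemma inner3 (x y : E3) : (inner ℝ x y : ℝ) = x 0 * y 0 + x 1 * y 1 + x 2 * y 2 := by
  simp [PiLp.inner_apply, RCLike.inner_apply, Fin.sum_univ_three]; ring

lemma inner2 (x y : E2) : (inner ℝ x y : ℝ) = x 0 * y 0 + x 1 * y 1 := by
  simp [PiLp.inner_apply, RCLike.inner_apply, Fin.sum_univ_two]; ring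

end Aux

theorem stmt3 (t : ℕ → ℝ) (ht : Admissible t) (ε : ℝ) (hε : ε ∈ Set.Ioo (0 : ℝ) 1)
    (u₁ u₂ u₃ w₁ w₂ w₃ : E3)
    (hc : IsCycleWithSupport C1 C2 (C3 t) ε u₁ u₂ u₃ w₁ w₂ w₃) :
    IsCycleWithSupport C1' C2' (C3' t) ε (projXY u₁) (projXY u₂) (projXY u₃)
      (projXY w₁) (projXY w₂) (projXY w₃) := by
  obtain ⟨hε0, hε1⟩ := hε
  obtain ⟨⟨hw1C, hVI1⟩, ⟨hw2C, hVI2⟩, ⟨hw3C, hVI3⟩, h1, h2, h3⟩ := hc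
  obtain ⟨hw10, hw11, hw12⟩ := mem_C1 hw1C
  obtain ⟨hw20, hw21, hw22⟩ := mem_C2 hw2C
  have hw32 := mem_C3_abs hw3C
  rw [abs_le] at hw12 hw22 hw32
  -- z-coordinates of the cycle equations
  have e1 : u₁ 2 = u₃ 2 + ε * (w₁ 2 - u₃ 2) := by
    have := congrArg (fun y : E3 => y 2) h1
    simpa [PiLp.add_apply, PiLp.sub_apply, PiLp.smul_apply] using this
  have e2 : u₂ 2 = u₁ 2 + ε * (w₂ 2 - u₁ 2) := by
    have := congrArg (fun y : E3 => y 2) h2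
    simpa [PiLp.add_apply, PiLp.sub_apply, PiLp.smul_apply] using this
  have e3 : u₃ 2 = u₂ 2 + ε * (w₃ 2 - u₂ 2) := by
    have := congrArg (fun y : E3 => y 2) h3
    simpa [PiLp.add_apply, PiLp.sub_apply, PiLp.smul_apply] using this
  have key : u₃ 2 * (1 - (1 - ε) ^ 3)
      = ε * ((1 - ε) ^ 2 * w₁ 2 + (1 - ε) * w₂ 2 + w₃ 2) := by
    linear_combination e3 + (1 - ε) * e2 + (1 - ε) ^ 2 * e1
  have hpos : 0 < 1 - (1 - ε) ^ 3 := by nlinarith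
  have c1 : 0 ≤ ε * (1 - ε) ^ 2 := by nlinarith [sq_nonneg (1 - ε)]
  have c2 : 0 ≤ ε * (1 - ε) := by nlinarith
  have hu3 : |u₃ 2| ≤ 1 := by
    rw [abs_le]
    constructor
    · have hlb : (-1) * (1 - (1 - ε) ^ 3) ≤ u₃ 2 * (1 - (1 - ε) ^ 3) := by
        linarith only [key, mul_nonneg c1 (by linarith : (0:ℝ) ≤ w₁ 2 + 1),
          mul_nonneg c2 (by linarith : (0:ℝ) ≤ w₂ 2 + 1),
          mul_nonneg hε0.le (by linarith : (0:ℝ) ≤ w₃ 2 + 1)]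
      exact le_of_mul_le_mul_right hlb hpos
    · have hub : u₃ 2 * (1 - (1 - ε) ^ 3) ≤ 1 * (1 - (1 - ε) ^ 3) := by
        linarith only [key, mul_nonneg c1 (by linarith : (0:ℝ) ≤ 1 - w₁ 2),
          mul_nonneg c2 (by linarith : (0:ℝ) ≤ 1 - w₂ 2),
          mul_nonneg hε0.le (by linarith : (0:ℝ) ≤ 1 - w₃ 2)]
      exact le_of_mul_le_mul_right hub hpos
  -- the projection onto C1 keeps the z-coordinate of u₃
  have hw1z : w₁ 2 = u₃ 2 := by
    have h := hVI1 _ (mem_C1_of_z hu3)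
    rw [inner3] at h
    simp only [PiLp.sub_apply, Matrix.cons_val_zero, Matrix.cons_val_one, Matrix.head_cons,
      Matrix.cons_val_two, Matrix.tail_cons] at h
    rw [hw10, hw11] at h
    have hx : (u₃ 2 - w₁ 2) * (u₃ 2 - w₁ 2) ≤ 0 := by linarith only [h]
    have h0 : u₃ 2 - w₁ 2 = 0 := mul_self_eq_zero.mp (le_antisymm hx (mul_self_nonneg _))
    linarith only [h0]
  have hu1z : u₁ 2 = u₃ 2 := by rw [e1, hw1z]; ring
  have hu1abs : |u₁ 2| ≤ 1 := by rw [hu1z]; exact hu3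
  have hw2z : w₂ 2 = u₁ 2 := by
    have h := hVI2 _ (mem_C2_of_z hu1abs)
    rw [inner3] at h
    simp only [PiLp.sub_apply, Matrix.cons_val_zero, Matrix.cons_val_one, Matrix.head_cons,
      Matrix.cons_val_two, Matrix.tail_cons] at h
    rw [hw20, hw21] at h
    have hx : (u₁ 2 - w₂ 2) * (u₁ 2 - w₂ 2) ≤ 0 := by linarith only [h]
    have h0 : u₁ 2 - w₂ 2 = 0 := mul_self_eq_zero.mp (le_antisymm hx (mul_self_nonneg _))
    linarith only [h0]
  have hu2z : u₂ 2 = u₁ 2 := by rw [e2, hw2z]; ring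
  have hw3z : w₃ 2 = u₂ 2 := by
    have hz : ε * (w₃ 2 - u₂ 2) = 0 := by
      have : u₃ 2 = u₂ 2 := by rw [hu2z, hu1z]
      linarith [e3]
    rcases mul_eq_zero.mp hz with h | h
    · exact absurd h (ne_of_gt hε0)
    · linarith
  -- projections of w₁ and w₂
  have hpw1 : projXY w₁ = aPt := by
    ext i
    fin_cases i <;> simp [projXY, aPt, hw10, hw11]
  have hpw2 : projXY w₂ = bPt := by
    ext i
    fin_cases i <;> simp [projXY, bPt, hw20, hw21]
  refine ⟨⟨?_, ?_⟩, ⟨?_, ?_⟩, ⟨?_, ?_⟩, ?_, ?_, ?_⟩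
  · rw [C1', hpw1]; exact Set.mem_singleton _
  · intro v hv
    have hv' : v = projXY w₁ := by rw [hpw1]; exact hv
    rw [hv', sub_self, inner_zero_left]
  · rw [C2', hpw2]; exact Set.mem_singleton _
  · intro v hv
    have hv' : v = projXY w₂ := by rw [hpw2]; exact hv
    rw [hv', sub_self, inner_zero_left]
  · -- membership of projXY w₃ in C3'
    have hcomp : ⇑projCLM ∘ pSeq t = vSeq t := by
      funext k
      ext i
      fin_cases i <;> simp [projCLM_coe, projXY, pSeq, vSeq]
    have hmem : projXY w₃ ∈ ⇑projCLM '' closure (convexHull ℝ (pSeq t '' {k | 1 ≤ k})) :=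
      ⟨w₃, hw3C, rfl⟩
    have h' := image_closure_convexHull projCLM _ hmem
    rw [← Set.image_comp, hcomp] at h'
    exact h'
  · -- variational inequality for C3'
    intro v hv
    have hK : C3' t ⊆
        {v : E2 | (inner ℝ (v - projXY w₃) (projXY u₂ - projXY w₃) : ℝ) ≤ 0} := by
      refine closure_minimal (convexHull_min ?_ ?_) ?_
      · rintro y ⟨k, hk, rfl⟩
        simp only [Set.mem_setOf_eq]
        have hpk : pSeq t k ∈ C3 t :=
          subset_closure (subset_convexHull ℝ _ ⟨k, hk, rfl⟩)
        have h := hVI3 _ hpk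
        rw [inner3] at h
        rw [inner2]
        simp only [PiLp.sub_apply, projXY, pSeq, vSeq, Matrix.cons_val_zero,
          Matrix.cons_val_one, Matrix.head_cons, Matrix.cons_val_two, Matrix.tail_cons] at h ⊢
        have hzero : ((-1 : ℝ) ^ k - w₃ 2) * (u₂ 2 - w₃ 2) = 0 := by
          rw [hw3z]; ring
        linarith only [h, hzero]
      · intro x hx y hy a b ha hb hab
        simp only [Set.mem_setOf_eq] at hx hy ⊢
        rw [inner_sub_left] at hx hy ⊢
        rw [inner_add_left, real_inner_smul_left, real_inner_smul_left]
        have hW : (inner ℝ (projXY w₃) (projXY u₂ - projXY w₃) : ℝ)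
            = a * inner ℝ (projXY w₃) (projXY u₂ - projXY w₃)
              + b * inner ℝ (projXY w₃) (projXY u₂ - projXY w₃) := by
          rw [← add_mul, hab, one_mul]
        have hx' : a * ((inner ℝ x (projXY u₂ - projXY w₃) : ℝ)
            - inner ℝ (projXY w₃) (projXY u₂ - projXY w₃)) ≤ a * 0 :=
          mul_le_mul_of_nonneg_left hx ha
        have hy' : b * ((inner ℝ y (projXY u₂ - projXY w₃) : ℝ)
            - inner ℝ (projXY w₃) (projXY u₂ - projXY w₃)) ≤ b * 0 :=
          mul_le_mul_of_nonneg_left hy hb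
        linarith only [hx', hy', hW]
      · exact isClosed_le
          (Continuous.inner (continuous_id.sub continuous_const) continuous_const)
          continuous_const
    exact hK hv
  · rw [h1, projXY_comb]
  · rw [h2, projXY_comb]
  · rw [h3, projXY_comb]
end
end

section
/- For each ε ∈ (0,1) there exists exactly one ε-cycle (u₁,u₂,u₃) for the sets (C₁,C₂,C₃) in ℝ³. -/
set_option maxHeartbeats 1000000


noncomputable section
open Real Filter

/-! ### Auxiliary lemmas -/

section AuxAbstract

variable {E : Type} [NormedAddCommGroup E] [InnerProductSpace ℝ E]

lemma isProj_exists [CompleteSpace E] {C : Set E} (hne : C.Nonempty) (hcl : IsClosed C)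
    (hco : Convex ℝ C) (u : E) : ∃ w, IsProj C u w := by
  obtain ⟨v, hvK, hv⟩ := exists_norm_eq_iInf_of_complete_convex hne hcl.isComplete hco u
  refine ⟨v, hvK, fun w hw => ?_⟩
  have h := (norm_eq_iInf_iff_real_inner_le_zero hco hvK).1 hv w hw
  calc (inner ℝ (w - v) (u - v) : ℝ) = inner ℝ (u - v) (w - v) := real_inner_comm _ _
  _ ≤ 0 := h

lemma relax_sq_le {C : Set E} {x y wx wy : E} (hx : IsProj C x wx) (hy : IsProj C y wy)
    {ε : ℝ} (h0 : 0 < ε) :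
    ‖(x + ε • (wx - x)) - (y + ε • (wy - y))‖ ^ 2
      ≤ ‖x - y‖ ^ 2 - ε * (2 - ε) * ‖(x - wx) - (y - wy)‖ ^ 2 := by
  have hxy := hx.2 wy hy.1
  have hyx := hy.2 wx hx.1
  set Δ := x - y with hΔ
  set e := (x - wx) - (y - wy) with he
  have hveq : (x + ε • (wx - x)) - (y + ε • (wy - y)) = Δ - ε • e := by
    rw [hΔ, he]; module
  have key : (0:ℝ) ≤ inner ℝ (wx - wy) e := by
    have hcalc : (inner ℝ (wx - wy) e : ℝ)
        = -(inner ℝ (wy - wx) (x - wx) : ℝ) - inner ℝ (wx - wy) (y - wy) := by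
      rw [he, inner_sub_right]
      have e2 : wy - wx = -(wx - wy) := by abel
      rw [e2, inner_neg_left]
      ring
    rw [hcalc]; linarith
  have hinner : ‖e‖^2 ≤ (inner ℝ Δ e : ℝ) := by
    have hsplit : (inner ℝ Δ e : ℝ) = inner ℝ (wx - wy) e + inner ℝ e e := by
      rw [← inner_add_left]
      congr 1
      rw [he, hΔ]; abel
    rw [hsplit, real_inner_self_eq_norm_sq]; linarith
  rw [hveq, norm_sub_sq_real, real_inner_smul_right, norm_smul]
  have habs : ‖ε‖ = ε := by rw [Real.norm_eq_abs, abs_of_pos h0]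
  rw [habs]
  have hε1 : ε * ‖e‖^2 ≤ ε * inner ℝ Δ e :=
    mul_le_mul_of_nonneg_left hinner (le_of_lt h0)
  nlinarith [sq_nonneg ‖e‖]

lemma relax_norm_le {C : Set E} {x y wx wy : E} (hx : IsProj C x wx) (hy : IsProj C y wy)
    {ε : ℝ} (h0 : 0 < ε) (h1 : ε < 1) :
    ‖(x + ε • (wx - x)) - (y + ε • (wy - y))‖ ≤ ‖x - y‖ := by
  have h := relax_sq_le hx hy h0
  have hκ : 0 ≤ ε * (2 - ε) * ‖(x - wx) - (y - wy)‖ ^ 2 := by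
    have : 0 ≤ ε * (2 - ε) := by nlinarith
    exact mul_nonneg this (sq_nonneg _)
  nlinarith [norm_nonneg ((x + ε • (wx - x)) - (y + ε • (wy - y))), norm_nonneg (x - y)]

end AuxAbstract

lemma norm_sq3 (x : E3) : ‖x‖^2 = (x 0)^2 + (x 1)^2 + (x 2)^2 := by
  rw [← real_inner_self_eq_norm_sq, inner3]; ring

lemma norm_le_of_sq_le {x : E3} {r : ℝ} (hr : 0 ≤ r) (h : ‖x‖^2 ≤ r^2) : ‖x‖ ≤ r := by
  nlinarith [norm_nonneg x]

/-! ### Properties of the admissible sequence -/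

lemma t_lb {t : ℕ → ℝ} (ht : Admissible t) {k : ℕ} (hk : 1 ≤ k) : π/4 ≤ t k := by
  rcases eq_or_lt_of_le hk with h | h
  · rw [← h, ht.2.1]
  · have := ht.1 (Set.mem_Ici.mpr (le_refl 1)) (Set.mem_Ici.mpr hk) h
    rw [ht.2.1] at this; linarith

lemma t_ub {t : ℕ → ℝ} (ht : Admissible t) {k : ℕ} (hk : 1 ≤ k) : t k < π/2 := by
  have h1 : t k < t (k+1) :=
    ht.1 (Set.mem_Ici.mpr hk) (Set.mem_Ici.mpr (by omega)) (by omega)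
  have h2 : t (k+1) ≤ π/2 := by
    apply ge_of_tendsto ht.2.2
    filter_upwards [eventually_ge_atTop (k+1)] with j hj
    rcases eq_or_lt_of_le hj with h | h
    · rw [← h]
    · exact (ht.1 (Set.mem_Ici.mpr (by omega)) (Set.mem_Ici.mpr (by omega)) h).le
  linarith

lemma t_mem_Icc {t : ℕ → ℝ} (ht : Admissible t) {k : ℕ} (hk : 1 ≤ k) :
    t k ∈ Set.Icc (-(π/2)) (π/2) := by
  have h1 := t_lb ht hk
  have h2 := t_ub ht hk
  have hπ := Real.pi_pos
  constructor <;> [linarith; linarith]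

/-! ### Basic facts about the sets -/

lemma C1_coords {x : E3} (hx : x ∈ C1) : x 0 = -2 ∧ x 1 = 2 := by
  have hsub : C1 ⊆ {x : E3 | x 0 = -2 ∧ x 1 = 2} := by
    apply convexHull_min
    · rintro y hy
      simp only [Set.mem_insert_iff, Set.mem_singleton_iff] at hy
      rcases hy with rfl | rfl <;> constructor <;> simp
    · intro a ha b hb s r hs hr hsr
      obtain ⟨ha0, ha1⟩ := ha; obtain ⟨hb0, hb1⟩ := hb
      constructor <;>
        simp only [Set.mem_setOf_eq, PiLp.add_apply, PiLp.smul_apply, smul_eq_mul,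
          ha0, ha1, hb0, hb1] <;> linarith
  exact hsub hx

lemma C2_coords {x : E3} (hx : x ∈ C2) : x 0 = 2 ∧ x 1 = 2 := by
  have hsub : C2 ⊆ {x : E3 | x 0 = 2 ∧ x 1 = 2} := by
    apply convexHull_min
    · rintro y hy
      simp only [Set.mem_insert_iff, Set.mem_singleton_iff] at hy
      rcases hy with rfl | rfl <;> constructor <;> simp
    · intro a ha b hb s r hs hr hsr
      obtain ⟨ha0, ha1⟩ := ha; obtain ⟨hb0, hb1⟩ := hb
      constructor <;>
        simp only [Set.mem_setOf_eq, PiLp.add_apply, PiLp.smul_apply, smul_eq_mul,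
          ha0, ha1, hb0, hb1] <;> linarith
  exact hsub hx

lemma C1_nonempty : C1.Nonempty :=
  ⟨WithLp.toLp 2 ![(-2 : ℝ), 2, 1], subset_convexHull ℝ _ (Set.mem_insert _ _)⟩

lemma C2_nonempty : C2.Nonempty :=
  ⟨WithLp.toLp 2 ![(2 : ℝ), 2, 1], subset_convexHull ℝ _ (Set.mem_insert _ _)⟩

lemma C1_convex : Convex ℝ C1 := convex_convexHull ℝ _

lemma C2_convex : Convex ℝ C2 := convex_convexHull ℝ _

lemma C1_closed : IsClosed C1 :=
  (((Set.finite_singleton _).insert _).isCompact_convexHull ℝ).isClosed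

lemma C2_closed : IsClosed C2 :=
  (((Set.finite_singleton _).insert _).isCompact_convexHull ℝ).isClosed

lemma C1_norm : ∀ x ∈ C1, ‖x‖ ≤ 3 := by
  intro x hx
  have hsub : C1 ⊆ Metric.closedBall (0:E3) 3 := by
    apply convexHull_min ?_ (convex_closedBall _ _)
    rintro y hy
    simp only [Set.mem_insert_iff, Set.mem_singleton_iff] at hy
    rcases hy with rfl | rfl <;>
    · rw [Metric.mem_closedBall, dist_zero_right]
      apply norm_le_of_sq_le (by norm_num)
      rw [norm_sq3]
      norm_num <;> simp <;> norm_num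
  have := hsub hx
  rwa [Metric.mem_closedBall, dist_zero_right] at this

lemma C2_norm : ∀ x ∈ C2, ‖x‖ ≤ 3 := by
  intro x hx
  have hsub : C2 ⊆ Metric.closedBall (0:E3) 3 := by
    apply convexHull_min ?_ (convex_closedBall _ _)
    rintro y hy
    simp only [Set.mem_insert_iff, Set.mem_singleton_iff] at hy
    rcases hy with rfl | rfl <;>
    · rw [Metric.mem_closedBall, dist_zero_right]
      apply norm_le_of_sq_le (by norm_num)
      rw [norm_sq3]
      norm_num <;> simp <;> norm_num
  have := hsub hx
  rwa [Metric.mem_closedBall, dist_zero_right] at this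

lemma pSeq_coords (t : ℕ → ℝ) (k : ℕ) :
    pSeq t k 0 = Real.cos (t k) ∧ pSeq t k 1 = Real.sin (t k) ∧ pSeq t k 2 = (-1:ℝ)^k := by
  refine ⟨?_, ?_, ?_⟩ <;> simp [pSeq]

lemma pSeq_mem_C3 (t : ℕ → ℝ) {k : ℕ} (hk : 1 ≤ k) : pSeq t k ∈ C3 t :=
  subset_closure (subset_convexHull ℝ _ ⟨k, hk, rfl⟩)

lemma C3_nonempty (t : ℕ → ℝ) : (C3 t).Nonempty := ⟨pSeq t 1, pSeq_mem_C3 t le_rfl⟩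

lemma C3_convex (t : ℕ → ℝ) : Convex ℝ (C3 t) := (convex_convexHull ℝ _).closure

lemma C3_closed (t : ℕ → ℝ) : IsClosed (C3 t) := isClosed_closure

lemma C3_norm {t : ℕ → ℝ} (ht : Admissible t) : ∀ x ∈ C3 t, ‖x‖ ≤ 3 := by
  intro x hx
  have hsub : C3 t ⊆ Metric.closedBall (0:E3) 3 := by
    apply closure_minimal ?_ Metric.isClosed_closedBall
    apply convexHull_min ?_ (convex_closedBall _ _)
    rintro y ⟨k, hk, rfl⟩
    rw [Metric.mem_closedBall, dist_zero_right]
    apply norm_le_of_sq_le (by norm_num)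
    rw [norm_sq3, (pSeq_coords t k).1, (pSeq_coords t k).2.1, (pSeq_coords t k).2.2]
    have h1 : Real.cos (t k) ^ 2 + Real.sin (t k) ^ 2 = 1 := Real.cos_sq_add_sin_sq _
    have h2 : ((-1:ℝ)^k)^2 = 1 := by
      rw [← pow_mul, mul_comm, pow_mul]
      norm_num
    nlinarith
  have := hsub hx
  rwa [Metric.mem_closedBall, dist_zero_right] at this

/-- Any closed half-space condition satisfied by all generators holds on `C3 t`. -/
lemma C3_le (t : ℕ → ℝ) (α β γ d : ℝ)
    (h : ∀ k : ℕ, 1 ≤ k → α * Real.cos (t k) + β * Real.sin (t k) + γ * (-1:ℝ)^k ≤ d) :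
    ∀ x ∈ C3 t, α * x 0 + β * x 1 + γ * x 2 ≤ d := by
  intro x hx
  have hsub : C3 t ⊆ {x : E3 | α * x 0 + β * x 1 + γ * x 2 ≤ d} := by
    apply closure_minimal
    · apply convexHull_min
      · rintro y ⟨k, hk, rfl⟩
        simp only [Set.mem_setOf_eq, (pSeq_coords t k).1, (pSeq_coords t k).2.1,
          (pSeq_coords t k).2.2]
        exact h k hk
      · intro a ha b hb s r hs hr hsr
        simp only [Set.mem_setOf_eq, PiLp.add_apply, PiLp.smul_apply, smul_eq_mul] at *
        have hd : s*d + r*d = d := by rw [← add_mul, hsr, one_mul]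
        nlinarith [mul_le_mul_of_nonneg_left ha hs, mul_le_mul_of_nonneg_left hb hr, hd]
    · have hf : Continuous fun x : E3 => α * x 0 + β * x 1 + γ * x 2 :=
        ((continuous_const.mul (EuclideanSpace.proj (0 : Fin 3)).continuous).add
          (continuous_const.mul (EuclideanSpace.proj (1 : Fin 3)).continuous)).add
          (continuous_const.mul (EuclideanSpace.proj (2 : Fin 3)).continuous)
      exact isClosed_le hf continuous_const
  exact hsub hx

/-- Coordinatewise bounds on `C3 t`. -/
lemma C3_coords {t : ℕ → ℝ} (ht : Admissible t) {x : E3} (hx : x ∈ C3 t) :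
    0 ≤ x 0 ∧ x 1 ≤ 1 ∧ (x 0)^2 + (x 1)^2 ≤ 1 ∧ |x 2| ≤ 1 := by
  have hQ : C3 t ⊆ {x : E3 | 0 ≤ x 0 ∧ x 1 ≤ 1 ∧ (x 0)^2 + (x 1)^2 ≤ 1 ∧ |x 2| ≤ 1} := by
    apply closure_minimal
    · apply convexHull_min
      · rintro y ⟨k, hk, rfl⟩
        obtain ⟨h0, h1, h2⟩ := pSeq_coords t k
        simp only [Set.mem_setOf_eq, h0, h1, h2]
        have hmem := t_mem_Icc ht hk
        refine ⟨Real.cos_nonneg_of_mem_Icc hmem, Real.sin_le_one _, ?_, ?_⟩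
        · rw [Real.cos_sq_add_sin_sq]
        · rcases Nat.even_or_odd k with h | h
          · rw [h.neg_one_pow]; norm_num
          · rw [h.neg_one_pow]; norm_num
      · intro a ha b hb s r hs hr hsr
        obtain ⟨ha0, ha1, ha2, ha3⟩ := ha
        obtain ⟨hb0, hb1, hb2, hb3⟩ := hb
        rw [abs_le] at ha3 hb3
        simp only [Set.mem_setOf_eq, PiLp.add_apply, PiLp.smul_apply, smul_eq_mul]
        refine ⟨by nlinarith, by nlinarith, ?_, ?_⟩
        · have h1 : s^2*((a 0)^2+(a 1)^2) ≤ s^2 := by nlinarith [sq_nonneg s]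
          have h2 : r^2*((b 0)^2+(b 1)^2) ≤ r^2 := by nlinarith [sq_nonneg r]
          have h3 : 0 ≤ s*r*(a 0 - b 0)^2 := by positivity
          have h4 : 0 ≤ s*r*(a 1 - b 1)^2 := by positivity
          have h5 : s*r*((a 0)^2+(a 1)^2) ≤ s*r := by nlinarith [mul_nonneg hs hr]
          have h6 : s*r*((b 0)^2+(b 1)^2) ≤ s*r := by nlinarith [mul_nonneg hs hr]
          nlinarith [h1, h2, h3, h4, h5, h6]
        · rw [abs_le]; constructor <;> nlinarith
    · have h0 : Continuous fun x : E3 => x 0 := (EuclideanSpace.proj (0 : Fin 3)).continuous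
      have h1 : Continuous fun x : E3 => x 1 := (EuclideanSpace.proj (1 : Fin 3)).continuous
      have h2 : Continuous fun x : E3 => x 2 := (EuclideanSpace.proj (2 : Fin 3)).continuous
      have hset : {x : E3 | 0 ≤ x 0 ∧ x 1 ≤ 1 ∧ (x 0)^2 + (x 1)^2 ≤ 1 ∧ |x 2| ≤ 1}
          = {x : E3 | 0 ≤ x 0} ∩ ({x : E3 | x 1 ≤ 1} ∩
            ({x : E3 | (x 0)^2 + (x 1)^2 ≤ 1} ∩ {x : E3 | |x 2| ≤ 1})) := by
        ext y; simp [Set.mem_setOf_eq, and_assoc]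
      rw [hset]
      exact (isClosed_le continuous_const h0).inter ((isClosed_le h1 continuous_const).inter
        (((isClosed_le ((h0.pow 2).add (h1.pow 2)) continuous_const)).inter
          (isClosed_le h2.abs continuous_const)))
  exact hQ hx


/-! ### Existence of a cycle -/

lemma cycle_exists {t : ℕ → ℝ} (ht : Admissible t) {ε : ℝ} (hε : ε ∈ Set.Ioo (0 : ℝ) 1) :
    ∃ u₁ u₂ u₃ : E3, IsCycle C1 C2 (C3 t) ε u₁ u₂ u₃ := by
  obtain ⟨hε0, hε1⟩ := hε
  obtain ⟨P₁, hP₁⟩ : ∃ P : E3 → E3, ∀ u, IsProj C1 u (P u) := by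
    choose P hP using fun u => isProj_exists C1_nonempty C1_closed C1_convex u
    exact ⟨P, hP⟩
  obtain ⟨P₂, hP₂⟩ : ∃ P : E3 → E3, ∀ u, IsProj C2 u (P u) := by
    choose P hP using fun u => isProj_exists C2_nonempty C2_closed C2_convex u
    exact ⟨P, hP⟩
  obtain ⟨P₃, hP₃⟩ : ∃ P : E3 → E3, ∀ u, IsProj (C3 t) u (P u) := by
    choose P hP using fun u => isProj_exists (C3_nonempty t) (C3_closed t) (C3_convex t) u
    exact ⟨P, hP⟩
  set R₁ : E3 → E3 := fun u => u + ε • (P₁ u - u) with hR₁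
  set R₂ : E3 → E3 := fun u => u + ε • (P₂ u - u) with hR₂
  set R₃ : E3 → E3 := fun u => u + ε • (P₃ u - u) with hR₃
  set T : E3 → E3 := fun u => R₃ (R₂ (R₁ u)) with hT
  have hTnon : ∀ x y, ‖T x - T y‖ ≤ ‖x - y‖ := by
    intro x y
    calc ‖T x - T y‖ ≤ ‖R₂ (R₁ x) - R₂ (R₁ y)‖ := relax_norm_le (hP₃ _) (hP₃ _) hε0 hε1
    _ ≤ ‖R₁ x - R₁ y‖ := relax_norm_le (hP₂ _) (hP₂ _) hε0 hε1
    _ ≤ ‖x - y‖ := relax_norm_le (hP₁ _) (hP₁ _) hε0 hε1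
  have hball : ∀ (C : Set E3) (P : E3 → E3), (∀ u, IsProj C u (P u)) → (∀ x ∈ C, ‖x‖ ≤ 3) →
      ∀ u : E3, ‖u + ε • (P u - u)‖ ≤ max ‖u‖ 3 := by
    intro C P hP hC u
    have h1 : ‖P u‖ ≤ 3 := hC _ (hP u).1
    have heq : u + ε • (P u - u) = (1-ε) • u + ε • P u := by module
    rw [heq]
    calc ‖(1-ε) • u + ε • P u‖ ≤ ‖(1-ε) • u‖ + ‖ε • P u‖ := norm_add_le _ _
    _ = (1-ε) * ‖u‖ + ε * ‖P u‖ := by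
        rw [norm_smul, norm_smul, Real.norm_eq_abs, Real.norm_eq_abs,
          abs_of_pos (by linarith), abs_of_pos hε0]
    _ ≤ (1-ε) * max ‖u‖ 3 + ε * max ‖u‖ 3 := by
        have g1 : ‖u‖ ≤ max ‖u‖ 3 := le_max_left _ _
        have g2 : ‖P u‖ ≤ max ‖u‖ 3 := le_trans h1 (le_max_right _ _)
        have := mul_le_mul_of_nonneg_left g1 (by linarith : (0:ℝ) ≤ 1 - ε)
        have := mul_le_mul_of_nonneg_left g2 hε0.le
        linarith
    _ = max ‖u‖ 3 := by ring
  have hTbound : ∀ u : E3, ‖T u‖ ≤ max ‖u‖ 3 := by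
    intro u
    have h1 := hball _ _ hP₁ C1_norm u
    have h2 := hball _ _ hP₂ C2_norm (R₁ u)
    have h3 := hball _ _ hP₃ (C3_norm ht) (R₂ (R₁ u))
    have g2 : max ‖R₁ u‖ 3 ≤ max ‖u‖ 3 := max_le h1 (le_max_right _ _)
    have g3 : max ‖R₂ (R₁ u)‖ 3 ≤ max ‖u‖ 3 := max_le (le_trans h2 g2) (le_max_right _ _)
    exact le_trans h3 g3
  -- approximate fixed points
  have hfix : ∀ n : ℕ, ∃ x : E3, x = (1 - 1/(n+2) : ℝ) • T x ∧ ‖x‖ ≤ 3 := by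
    intro n
    have hn2 : (0:ℝ) < (n:ℝ) + 2 := by positivity
    have hfrac : 0 < 1/((n:ℝ)+2) := by positivity
    have hfrac1 : 1/((n:ℝ)+2) ≤ 1/2 := by
      apply div_le_div_of_nonneg_left (by norm_num) (by norm_num)
      · norm_num
      -- fallback
    set θ : ℝ := 1 - 1/(n+2) with hθ
    have hθ0 : 0 < θ := by rw [hθ]; linarith
    have hθ1 : θ < 1 := by rw [hθ]; linarith
    have hlip : LipschitzWith θ.toNNReal (fun x : E3 => θ • T x) := by
      apply LipschitzWith.of_dist_le_mul
      intro x y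
      rw [Real.coe_toNNReal θ hθ0.le, dist_eq_norm, dist_eq_norm, ← smul_sub,
        norm_smul, Real.norm_eq_abs, abs_of_pos hθ0]
      exact mul_le_mul_of_nonneg_left (hTnon x y) hθ0.le
    have hcontr : ContractingWith θ.toNNReal (fun x : E3 => θ • T x) := by
      refine ⟨?_, hlip⟩
      rw [← NNReal.coe_lt_coe, Real.coe_toNNReal θ hθ0.le, NNReal.coe_one]
      exact hθ1
    set x₀ : E3 := hcontr.fixedPoint with hx₀
    have hfp : θ • T x₀ = x₀ := hcontr.fixedPoint_isFixedPt
    have hxb : ‖x₀‖ ≤ 3 := by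
      by_contra hgt
      push_neg at hgt
      have h1 : ‖x₀‖ = θ * ‖T x₀‖ := by
        conv_lhs => rw [← hfp]
        rw [norm_smul, Real.norm_eq_abs, abs_of_pos hθ0]
      have h2 : ‖T x₀‖ ≤ max ‖x₀‖ 3 := hTbound _
      rw [max_eq_left (by linarith)] at h2
      nlinarith [norm_nonneg (T x₀)]
    exact ⟨x₀, hfp.symm, hxb⟩
  choose x hx1 hx2 using hfix
  have hTb3 : ∀ n, ‖T (x n)‖ ≤ 3 := fun n => le_trans (hTbound _) (max_le (hx2 n) le_rfl)
  have hdefect : ∀ n, ‖x n - T (x n)‖ ≤ 3 / (n+2) := by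
    intro n
    have h1 : x n - T (x n) = -(1/((n:ℝ)+2)) • T (x n) := by
      nth_rewrite 1 [hx1 n]
      module
    rw [h1, norm_smul, Real.norm_eq_abs, abs_neg, abs_of_pos (by positivity)]
    rw [div_eq_mul_one_div 3 ((n:ℝ)+2), mul_comm (3:ℝ)]
    apply mul_le_mul_of_nonneg_left (hTb3 n) (by positivity)
  have hd0 : Tendsto (fun n => x n - T (x n)) atTop (nhds 0) := by
    apply squeeze_zero_norm hdefect
    have h2 : Tendsto (fun n : ℕ => (n:ℝ) + 2) atTop atTop :=
      tendsto_atTop_add_const_right atTop 2 tendsto_natCast_atTop_atTop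
    simpa using tendsto_const_nhds.div_atTop h2
  have hmem : ∀ n, x n ∈ Metric.closedBall (0:E3) 3 := by
    intro n
    rw [Metric.mem_closedBall, dist_zero_right]
    exact hx2 n
  obtain ⟨a, _, φ, hφmono, hφtend⟩ :=
    (isCompact_closedBall (0:E3) 3).tendsto_subseq hmem
  have hTcont : Continuous T := by
    have hl : LipschitzWith 1 T := by
      apply LipschitzWith.of_dist_le_mul
      intro x' y'
      rw [NNReal.coe_one, one_mul, dist_eq_norm, dist_eq_norm]
      exact hTnon x' y'
    exact hl.continuous
  have hTa : Tendsto (fun n => T (x (φ n))) atTop (nhds (T a)) :=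
    (hTcont.tendsto a).comp hφtend
  have hsub : Tendsto (fun n => x (φ n) - T (x (φ n))) atTop (nhds (a - T a)) :=
    hφtend.sub hTa
  have hsub0 : Tendsto (fun n => x (φ n) - T (x (φ n))) atTop (nhds 0) :=
    hd0.comp hφmono.tendsto_atTop
  have hzero : a - T a = 0 := tendsto_nhds_unique hsub hsub0
  have hfixa : a = T a := by rwa [sub_eq_zero] at hzero
  refine ⟨R₁ a, R₂ (R₁ a), a, P₁ a, P₂ (R₁ a), P₃ (R₂ (R₁ a)),
    hP₁ a, hP₂ (R₁ a), hP₃ (R₂ (R₁ a)), rfl, rfl, hfixa⟩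



/-- Pure-real computation: the horizontal normal component `m₀` is positive. -/
lemma caseA_lemma {ε m₀ m₁ q₀ q₁ : ℝ} (hε0 : 0 < ε) (hε1 : ε < 1) (hq0 : 0 ≤ q₀)
    (hq1 : q₁ ≤ 1) (hquad : q₀^2 + q₁^2 ≤ 1)
    (key0 : (3 - 3*ε + ε^2) * m₀ = 2*ε - (2-ε) * q₀)
    (hm₁ : 0 < m₁) (hF2 : m₁ ≤ m₀ * q₀ + m₁ * q₁) (hm0 : m₀ ≤ 0) : False := by
  have h1 : m₁ * (1 - q₁) ≤ m₀ * q₀ := by nlinarith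
  have h2 : m₀ * q₀ ≤ 0 := mul_nonpos_iff.mpr (Or.inr ⟨hm0, hq0⟩)
  have h3 : 1 ≤ q₁ := by nlinarith
  have h4 : q₀^2 ≤ 0 := by nlinarith
  have h5 : q₀ = 0 := by nlinarith [sq_nonneg q₀]
  rw [h5, mul_zero, sub_zero] at key0
  nlinarith [key0, hm0, hε0, hε1]


/-- Case B1: if the sup of the linear functional over the generators is at most its limit
value `m₁`, we get a contradiction with `m₀ > 0` (Jordan-type inequality). -/
lemma caseB1_lemma {t : ℕ → ℝ} (ht : Admissible t) {m₀ m₁ c : ℝ}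
    (hm0 : 0 < m₀) (hm₁pos : 0 < m₁) (hc : c ≤ m₁)
    (hF1 : ∀ k : ℕ, 1 ≤ k → m₀ * Real.cos (t k) + m₁ * Real.sin (t k) ≤ c) : False := by
  have hηpos : 0 < min (π/4) (m₀/m₁) :=
    lt_min (by positivity) (div_pos hm0 hm₁pos)
  obtain ⟨k, hk1, hkt⟩ : ∃ k, 1 ≤ k ∧ π/2 - (min (π/4) (m₀/m₁))/2 < t k := by
    have h1 : ∀ᶠ k in atTop, π/2 - (min (π/4) (m₀/m₁))/2 < t k :=
      ht.2.2.eventually (eventually_gt_nhds (by linarith))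
    obtain ⟨k, hk⟩ := ((eventually_ge_atTop 1).and h1).exists
    exact ⟨k, hk.1, hk.2⟩
  have htub := t_ub ht hk1
  have htlb := t_lb ht hk1
  have hπ := Real.pi_pos
  have hπ4 := Real.pi_le_four
  have hθpos : 0 < π/2 - t k := by linarith
  have hθη : π/2 - t k < min (π/4) (m₀/m₁) := by linarith
  have hπ41 : π/4 ≤ 1 := by linarith
  have hθ1 : π/2 - t k ≤ 1 := le_trans hθη.le (le_trans (min_le_left _ _) hπ41)
  have hθm : m₁ * (π/2 - t k) < m₀ := by
    have h2 : π/2 - t k < m₀/m₁ := lt_of_lt_of_le hθη (min_le_right _ _)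
    rw [lt_div_iff₀ hm₁pos] at h2
    linarith
  have hθhalfpi : π/2 - t k ≤ π/2 := by linarith
  have hsinθ : 2/π*(π/2 - t k) ≤ Real.sin (π/2 - t k) :=
    Real.mul_le_sin hθpos.le hθhalfpi
  have hcosθ : 1 - (π/2 - t k)^2/2 ≤ Real.cos (π/2 - t k) :=
    Real.one_sub_sq_div_two_le_cos
  have hsin2 : (π/2 - t k)/2 ≤ Real.sin (π/2 - t k) := by
    have hd : 0 ≤ (π/2 - t k)*(4-π)/(2*π) :=
      div_nonneg (mul_nonneg hθpos.le (by linarith)) (by positivity)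
    have hid : 2/π*(π/2 - t k) - (π/2 - t k)/2 = (π/2 - t k)*(4-π)/(2*π) := by
      field_simp
      ring
    linarith
  have hck : Real.cos (t k) = Real.sin (π/2 - t k) := (Real.sin_pi_div_two_sub _).symm
  have hsk : Real.sin (t k) = Real.cos (π/2 - t k) := (Real.cos_pi_div_two_sub _).symm
  have hgk := hF1 k hk1
  rw [hck, hsk] at hgk
  have hbig : m₁ * (1 - Real.cos (π/2 - t k)) < m₀ * Real.sin (π/2 - t k) := by
    have b1 : m₁*(1 - Real.cos (π/2 - t k)) ≤ m₁*((π/2 - t k)^2/2) :=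
      mul_le_mul_of_nonneg_left (by linarith) hm₁pos.le
    have b2 : m₁*((π/2 - t k)^2/2) < m₀*((π/2 - t k)/2) := by
      nlinarith [mul_lt_mul_of_pos_right hθm (by positivity : (0:ℝ) < (π/2 - t k)/2)]
    have b3 : m₀*((π/2 - t k)/2) ≤ m₀*Real.sin (π/2 - t k) :=
      mul_le_mul_of_nonneg_left hsin2 hm0.le
    linarith
  linarith

/-- Case B2: the supremum is attained; a vertical chord of `C3 t` on the face of the
maximizers is impossible. -/
lemma caseB2_lemma {t : ℕ → ℝ} (ht : Admissible t) {w x : E3}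
    (hw : w ∈ C3 t) (hx : x ∈ C3 t) {δ : ℝ} (hδ : δ ≠ 0)
    (hx0 : x 0 = w 0) (hx1 : x 1 = w 1) (hx2 : x 2 = w 2 - δ)
    {m₀ m₁ : ℝ} (hm0 : 0 < m₀) (hm₁pos : 0 < m₁)
    (hc : m₁ < m₀ * w 0 + m₁ * w 1)
    (hF1 : ∀ k : ℕ, 1 ≤ k → m₀ * Real.cos (t k) + m₁ * Real.sin (t k)
      ≤ m₀ * w 0 + m₁ * w 1) : False := by
  have hcos : Tendsto (fun k => Real.cos (t k)) atTop (nhds 0) := by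
    have hc' := (Real.continuous_cos.tendsto (π/2)).comp ht.2.2
    rw [Real.cos_pi_div_two] at hc'
    exact hc'
  have hsin : Tendsto (fun k => Real.sin (t k)) atTop (nhds 1) := by
    have hs' := (Real.continuous_sin.tendsto (π/2)).comp ht.2.2
    rw [Real.sin_pi_div_two] at hs'
    exact hs'
  set c := m₀ * w 0 + m₁ * w 1 with hcdef
  have hgt : Tendsto (fun k => m₀ * Real.cos (t k) + m₁ * Real.sin (t k))
      atTop (nhds m₁) := by
    have h1 : Tendsto (fun k => m₀ * Real.cos (t k) + m₁ * Real.sin (t k))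
        atTop (nhds (m₀ * 0 + m₁ * 1)) :=
      (tendsto_const_nhds.mul hcos).add (tendsto_const_nhds.mul hsin)
    simpa using h1
  obtain ⟨K, hK⟩ := eventually_atTop.mp
    (hgt.eventually (eventually_lt_nhds (show m₁ < (m₁+c)/2 by linarith)))
  obtain ⟨k₀, hk₀mem, hk₀max⟩ := Finset.exists_max_image (Finset.Icc 1 (K+1))
    (fun k => m₀ * Real.cos (t k) + m₁ * Real.sin (t k))
    ⟨1, Finset.mem_Icc.mpr ⟨le_rfl, by omega⟩⟩
  have hk₀1 : 1 ≤ k₀ := (Finset.mem_Icc.mp hk₀mem).1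
  have hup : ∀ k, 1 ≤ k → m₀ * Real.cos (t k) + m₁ * Real.sin (t k)
      ≤ max (m₀ * Real.cos (t k₀) + m₁ * Real.sin (t k₀)) ((m₁+c)/2) := by
    intro k hk
    by_cases hkK : k ≤ K+1
    · exact le_max_of_le_left (by simpa using hk₀max k (Finset.mem_Icc.mpr ⟨hk, hkK⟩))
    · exact le_max_of_le_right (hK k (by omega)).le
  have hcle : c ≤ max (m₀ * Real.cos (t k₀) + m₁ * Real.sin (t k₀)) ((m₁+c)/2) := by
    have happ := C3_le t m₀ m₁ 0
      (max (m₀ * Real.cos (t k₀) + m₁ * Real.sin (t k₀)) ((m₁+c)/2))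
      (fun k hk => by simpa using hup k hk) w hw
    rw [hcdef]
    simpa using happ
  have hgk₀ : m₀ * Real.cos (t k₀) + m₁ * Real.sin (t k₀) = c := by
    have h1 := hF1 k₀ hk₀1
    rcases max_cases (m₀ * Real.cos (t k₀) + m₁ * Real.sin (t k₀)) ((m₁+c)/2) with
      ⟨hmx, _⟩ | ⟨hmx, _⟩
    · rw [hmx] at hcle; linarith
    · rw [hmx] at hcle; linarith
  set S₀ := (Finset.Icc 1 (K+1)).filter
    (fun k => m₀ * Real.cos (t k) + m₁ * Real.sin (t k) = c) with hS₀def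
  have hk₀S : k₀ ∈ S₀ := Finset.mem_filter.mpr ⟨hk₀mem, hgk₀⟩
  have hS₀sub : ∀ i ∈ S₀, 1 ≤ i ∧ m₀ * Real.cos (t i) + m₁ * Real.sin (t i) = c :=
    fun i hi => ⟨(Finset.mem_Icc.mp (Finset.mem_filter.mp hi).1).1,
      (Finset.mem_filter.mp hi).2⟩
  have hsin_inj : ∀ i j : ℕ, 1 ≤ i → 1 ≤ j → i ≠ j →
      Real.sin (t i) ≠ Real.sin (t j) := by
    intro i j hi hj hij hcontra
    have h1 : t i = t j :=
      Real.injOn_sin (t_mem_Icc ht hi) (t_mem_Icc ht hj) hcontra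
    exact hij (ht.1.injOn (Set.mem_Ici.mpr hi) (Set.mem_Ici.mpr hj) h1)
  have hbracket : ∀ i ∈ S₀, ∀ j ∈ S₀, i ≠ j →
      m₀*(Real.sin (t i) + Real.sin (t j)) = m₁*(Real.cos (t i) + Real.cos (t j)) := by
    intro i hi j hj hij
    obtain ⟨hi1, hgi⟩ := hS₀sub i hi
    obtain ⟨hj1, hgj⟩ := hS₀sub j hj
    have Ci := Real.cos_sq_add_sin_sq (t i)
    have Cj := Real.cos_sq_add_sin_sq (t j)
    have hij2 : (Real.sin (t i) - Real.sin (t j)) *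
        (m₀*(Real.sin (t i) + Real.sin (t j)) - m₁*(Real.cos (t i) + Real.cos (t j)))
        = 0 := by
      linear_combination m₀ * Ci - m₀ * Cj
        - (Real.cos (t i) + Real.cos (t j)) * hgi
        + (Real.cos (t i) + Real.cos (t j)) * hgj
    rcases mul_eq_zero.mp hij2 with h | h
    · exact absurd (by linarith : Real.sin (t i) = Real.sin (t j))
        (hsin_inj i j hi1 hj1 hij)
    · linarith
  have htwo : ∀ i ∈ S₀, ∀ j ∈ S₀, ∀ l ∈ S₀, i ≠ j → i ≠ l → j ≠ l → False := by
    intro i hi j hj l hl hij hil hjl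
    obtain ⟨hi1, hgi⟩ := hS₀sub i hi
    obtain ⟨hl1, hgl⟩ := hS₀sub l hl
    have B1 := hbracket i hi j hj hij
    have B2 := hbracket j hj l hl hjl
    have hfinal : (m₀^2 + m₁^2) * (Real.sin (t i) - Real.sin (t l)) = 0 := by
      linear_combination m₀ * B1 - m₀ * B2 + m₁ * hgi - m₁ * hgl
    have hpos : 0 < m₀^2 + m₁^2 := by positivity
    rcases mul_eq_zero.mp hfinal with h | h
    · linarith
    · exact hsin_inj i l hi1 hl1 hil (by linarith)
  have hcard : S₀.card ≤ 2 := by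
    by_contra hgt2
    push_neg at hgt2
    obtain ⟨a, ha, b, hb, c', hc', hab, hac, hbc⟩ := Finset.two_lt_card.mp hgt2
    exact htwo a ha b hb c' hc' hab hac hbc
  obtain ⟨α, β, γ, hℓ⟩ : ∃ α β γ : ℝ, ∀ k ∈ S₀,
      α + β * Real.cos (t k) + γ * Real.sin (t k) = (-1:ℝ)^k := by
    have hc1 : 1 ≤ S₀.card := Finset.card_pos.mpr ⟨k₀, hk₀S⟩
    rcases eq_or_lt_of_le hc1 with h1 | h1
    · obtain ⟨a, ha⟩ := Finset.card_eq_one.mp h1.symm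
      refine ⟨(-1:ℝ)^a, 0, 0, ?_⟩
      intro k hk
      rw [ha, Finset.mem_singleton] at hk
      subst hk
      ring
    · have h2 : S₀.card = 2 := le_antisymm hcard h1
      obtain ⟨a, b, hab, hS⟩ := Finset.card_eq_two.mp h2
      have ha1 : 1 ≤ a := (hS₀sub a (by rw [hS]; simp)).1
      have hb1 : 1 ≤ b := (hS₀sub b (by rw [hS]; simp)).1
      have hne : Real.sin (t b) - Real.sin (t a) ≠ 0 :=
        sub_ne_zero.mpr (hsin_inj b a hb1 ha1 (Ne.symm hab))
      have hD : 0 < (Real.cos (t b) - Real.cos (t a))^2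
          + (Real.sin (t b) - Real.sin (t a))^2 := by
        have h3 : 0 < (Real.sin (t b) - Real.sin (t a))^2 := by
          rcases lt_or_gt_of_ne hne with h | h <;> nlinarith
        nlinarith [sq_nonneg (Real.cos (t b) - Real.cos (t a))]
      refine ⟨(-1:ℝ)^a
          - (((-1:ℝ)^b - (-1:ℝ)^a) * (Real.cos (t b) - Real.cos (t a)) /
            ((Real.cos (t b) - Real.cos (t a))^2 + (Real.sin (t b) - Real.sin (t a))^2))
            * Real.cos (t a)
          - (((-1:ℝ)^b - (-1:ℝ)^a) * (Real.sin (t b) - Real.sin (t a)) /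
            ((Real.cos (t b) - Real.cos (t a))^2 + (Real.sin (t b) - Real.sin (t a))^2))
            * Real.sin (t a),
        ((-1:ℝ)^b - (-1:ℝ)^a) * (Real.cos (t b) - Real.cos (t a)) /
          ((Real.cos (t b) - Real.cos (t a))^2 + (Real.sin (t b) - Real.sin (t a))^2),
        ((-1:ℝ)^b - (-1:ℝ)^a) * (Real.sin (t b) - Real.sin (t a)) /
          ((Real.cos (t b) - Real.cos (t a))^2 + (Real.sin (t b) - Real.sin (t a))^2), ?_⟩
      intro k hk
      rw [hS, Finset.mem_insert, Finset.mem_singleton] at hk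
      rcases hk with rfl | rfl
      · ring
      · field_simp
        ring
  set c₂ := ((Finset.Icc 1 (K+1)) \ S₀).fold max ((m₁+c)/2)
    (fun k => m₀ * Real.cos (t k) + m₁ * Real.sin (t k)) with hc₂def
  have hgap : ∀ k, 1 ≤ k → k ∉ S₀ →
      m₀ * Real.cos (t k) + m₁ * Real.sin (t k) ≤ c₂ := by
    intro k hk hkS
    by_cases hkK : k ≤ K+1
    · exact (Finset.le_fold_max _).mpr (Or.inr ⟨k,
        Finset.mem_sdiff.mpr ⟨Finset.mem_Icc.mpr ⟨hk, hkK⟩, hkS⟩, le_rfl⟩)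
    · exact (Finset.le_fold_max _).mpr (Or.inl (hK k (by omega)).le)
  have hc₂lt : c₂ < c := by
    rw [hc₂def]
    apply (Finset.fold_max_lt _).mpr
    refine ⟨by linarith, ?_⟩
    intro k hk
    obtain ⟨hkI, hkS⟩ := Finset.mem_sdiff.mp hk
    have h1 := hF1 k (Finset.mem_Icc.mp hkI).1
    have h2 : m₀ * Real.cos (t k) + m₁ * Real.sin (t k) ≠ c := fun h =>
      hkS (Finset.mem_filter.mpr ⟨hkI, h⟩)
    exact lt_of_le_of_ne h1 h2
  have hBpos : (0:ℝ) < 1 + |α| + |β| + |γ| := by positivity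
  have hBb : ∀ k : ℕ, |(-1:ℝ)^k - (α + β * Real.cos (t k) + γ * Real.sin (t k))|
      ≤ 1 + |α| + |β| + |γ| := by
    intro k
    have h1 : |Real.cos (t k)| ≤ 1 :=
      abs_le.mpr ⟨Real.neg_one_le_cos _, Real.cos_le_one _⟩
    have h2 : |Real.sin (t k)| ≤ 1 :=
      abs_le.mpr ⟨Real.neg_one_le_sin _, Real.sin_le_one _⟩
    have h3 : |(-1:ℝ)^k| = 1 := by simp
    have h4 : |β * Real.cos (t k)| ≤ |β| := by
      rw [abs_mul]; nlinarith [abs_nonneg β]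
    have h5 : |γ * Real.sin (t k)| ≤ |γ| := by
      rw [abs_mul]; nlinarith [abs_nonneg γ]
    calc |(-1:ℝ)^k - (α + β * Real.cos (t k) + γ * Real.sin (t k))|
        ≤ |(-1:ℝ)^k| + |α + β * Real.cos (t k) + γ * Real.sin (t k)| := abs_sub _ _
    _ ≤ 1 + |α| + |β| + |γ| := by
        have h6 := abs_add_le (α + β * Real.cos (t k)) (γ * Real.sin (t k))
        have h7 := abs_add_le α (β * Real.cos (t k))
        rw [h3]
        linarith
  set η := (c - c₂)/(2*(1 + |α| + |β| + |γ|)) with hηdef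
  have hηpos : 0 < η := by
    rw [hηdef]
    exact div_pos (by linarith) (by linarith)
  have hηB : η * (1 + |α| + |β| + |γ|) = (c - c₂)/2 := by
    rw [hηdef]
    field_simp
  have hcondP : ∀ k : ℕ, 1 ≤ k →
      (m₀ - η*β) * Real.cos (t k) + (m₁ - η*γ) * Real.sin (t k) + η * (-1:ℝ)^k
        ≤ c + η*α := by
    intro k hk
    by_cases hkS : k ∈ S₀
    · have hgk : m₀ * Real.cos (t k) + m₁ * Real.sin (t k) = c := (hS₀sub k hkS).2
      have hlkη : η*(α + β * Real.cos (t k) + γ * Real.sin (t k)) = η*(-1:ℝ)^k := by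
        rw [hℓ k hkS]
      nlinarith [hgk, hlkη]
    · have h1 := hgap k hk hkS
      have h2 : η * ((-1:ℝ)^k - (α + β * Real.cos (t k) + γ * Real.sin (t k)))
          ≤ η * (1 + |α| + |β| + |γ|) :=
        mul_le_mul_of_nonneg_left (le_trans (le_abs_self _) (hBb k)) hηpos.le
      nlinarith [h1, h2, hηB, hc₂lt]
  have hcondM : ∀ k : ℕ, 1 ≤ k →
      (m₀ + η*β) * Real.cos (t k) + (m₁ + η*γ) * Real.sin (t k) + (-η) * (-1:ℝ)^k
        ≤ c - η*α := by
    intro k hk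
    by_cases hkS : k ∈ S₀
    · have hgk : m₀ * Real.cos (t k) + m₁ * Real.sin (t k) = c := (hS₀sub k hkS).2
      have hlkη : η*(α + β * Real.cos (t k) + γ * Real.sin (t k)) = η*(-1:ℝ)^k := by
        rw [hℓ k hkS]
      nlinarith [hgk, hlkη]
    · have h1 := hgap k hk hkS
      have h2 : η * ((α + β * Real.cos (t k) + γ * Real.sin (t k)) - (-1:ℝ)^k)
          ≤ η * (1 + |α| + |β| + |γ|) := by
        apply mul_le_mul_of_nonneg_left _ hηpos.le
        have h3 := hBb k
        rw [abs_sub_comm] at h3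
        exact le_trans (le_abs_self _) h3
      nlinarith [h1, h2, hηB, hc₂lt]
  have happ1 := C3_le t (m₀ - η*β) (m₁ - η*γ) η (c + η*α) hcondP
  have happ2 := C3_le t (m₀ + η*β) (m₁ + η*γ) (-η) (c - η*α) hcondM
  have hw1 := happ1 w hw
  have hw2 := happ2 w hw
  have hxx1 := happ1 x hx
  have hxx2 := happ2 x hx
  rw [hx0, hx1, hx2] at hxx1 hxx2
  have hδ1 : η * δ ≤ 0 := by nlinarith [hw1, hxx2]
  have hδ2 : 0 ≤ η * δ := by nlinarith [hw2, hxx1]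
  have hfin : δ = 0 := by
    rcases mul_eq_zero.mp (le_antisymm hδ1 hδ2) with h | h
    · exact absurd h (ne_of_gt hηpos)
    · exact h
  exact hδ hfin

/-- The heart of the uniqueness proof: a nonzero purely vertical difference between
two cycles is impossible. -/
lemma uniq_contradiction {t : ℕ → ℝ} (ht : Admissible t) {ε : ℝ} (hε0 : 0 < ε) (hε1 : ε < 1)
    {u₁ u₂ u₃ v₁ v₂ v₃ w₁ w₂ w₃ x₁ x₂ x₃ : E3}
    (hw₁ : IsProj C1 u₃ w₁) (hw₂ : IsProj C2 u₁ w₂) (hw₃ : IsProj (C3 t) u₂ w₃)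
    (hx₁ : IsProj C1 v₃ x₁) (hx₂ : IsProj C2 v₁ x₂) (hx₃ : IsProj (C3 t) v₂ x₃)
    (he₁ : u₁ = u₃ + ε • (w₁ - u₃)) (he₂ : u₂ = u₁ + ε • (w₂ - u₁))
    (he₃ : u₃ = u₂ + ε • (w₃ - u₂))
    (hf₁ : v₁ = v₃ + ε • (x₁ - v₃)) (hf₂ : v₂ = v₁ + ε • (x₂ - v₁))
    (hf₃ : v₃ = v₂ + ε • (x₃ - v₂))
    (d2 : u₂ - v₂ = u₃ - v₃) (dw3 : w₃ - x₃ = u₃ - v₃)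
    (hΔ0 : (u₃ - v₃) 0 = 0) (hΔ1 : (u₃ - v₃) 1 = 0) (hδ : (u₃ - v₃) 2 ≠ 0) : False := by
  have hx₃c : x₃ = w₃ - (u₃ - v₃) := by rw [← dw3]; abel
  have hv₂c : v₂ = u₂ - (u₃ - v₃) := by rw [← d2]; abel
  -- (a) the vertical component of the normal vector vanishes
  have hn₂ : u₂ 2 - w₃ 2 = 0 := by
    have hA := hw₃.2 x₃ hx₃.1
    have hB := hx₃.2 w₃ hw₃.1
    have e1 : x₃ - w₃ = -(u₃ - v₃) := by rw [hx₃c]; abel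
    have e2 : v₂ - x₃ = u₂ - w₃ := by rw [hx₃c, hv₂c]; abel
    rw [e1, inner_neg_left] at hA
    rw [dw3, e2] at hB
    have hval : (inner ℝ (u₃ - v₃) (u₂ - w₃) : ℝ) = (u₃ - v₃) 2 * (u₂ 2 - w₃ 2) := by
      rw [inner3, hΔ0, hΔ1]
      simp only [PiLp.sub_apply]
      ring
    rw [hval] at hA hB
    have hprod : (u₃ - v₃) 2 * (u₂ 2 - w₃ 2) = 0 := le_antisymm hB (by linarith)
    rcases mul_eq_zero.mp hprod with h | h
    · exact absurd h hδ
    · exact h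
  -- variational inequalities at the generators
  have hF1 : ∀ k : ℕ, 1 ≤ k →
      (u₂ 0 - w₃ 0) * Real.cos (t k) + (u₂ 1 - w₃ 1) * Real.sin (t k)
        ≤ (u₂ 0 - w₃ 0) * w₃ 0 + (u₂ 1 - w₃ 1) * w₃ 1 := by
    intro k hk
    have h := hw₃.2 (pSeq t k) (pSeq_mem_C3 t hk)
    rw [inner3] at h
    simp only [PiLp.sub_apply, (pSeq_coords t k).1, (pSeq_coords t k).2.1,
      (pSeq_coords t k).2.2] at h
    have hzero : ((-1:ℝ)^k - w₃ 2) * (u₂ 2 - w₃ 2) = 0 :=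
      mul_eq_zero_of_right _ hn₂
    nlinarith [h, hzero]
  -- coordinate equations of the cycle
  have hcoord : ∀ (p q r : E3) (i : Fin 3), p = q + ε • (r - q) →
      p i = q i + ε * (r i - q i) := by
    intro p q r i hp
    rw [hp]
    simp [PiLp.add_apply, PiLp.smul_apply, PiLp.sub_apply]
  have hw₁c := C1_coords hw₁.1
  have hw₂c := C2_coords hw₂.1
  have e10 := hcoord _ _ _ 0 he₁
  rw [hw₁c.1] at e10
  have e11 := hcoord _ _ _ 1 he₁
  rw [hw₁c.2] at e11
  have e20 := hcoord _ _ _ 0 he₂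
  rw [hw₂c.1] at e20
  have e21 := hcoord _ _ _ 1 he₂
  rw [hw₂c.2] at e21
  have e30 := hcoord _ _ _ 0 he₃
  have e31 := hcoord _ _ _ 1 he₃
  have key0 : ε * ((3 - 3*ε + ε^2) * (u₂ 0 - w₃ 0) - (2*ε - (2-ε) * w₃ 0)) = 0 := by
    linear_combination e20 + (1-ε)*e10 + (1-ε)^2*e30
  have key1 : ε * ((3 - 3*ε + ε^2) * (u₂ 1 - w₃ 1) - ((2-ε) * (2 - w₃ 1))) = 0 := by
    linear_combination e21 + (1-ε)*e11 + (1-ε)^2*e31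
  have key0' : (3 - 3*ε + ε^2) * (u₂ 0 - w₃ 0) = 2*ε - (2-ε) * w₃ 0 := by
    rcases mul_eq_zero.mp key0 with h | h
    · exact absurd h (ne_of_gt hε0)
    · linarith
  have key1' : (3 - 3*ε + ε^2) * (u₂ 1 - w₃ 1) = (2-ε) * (2 - w₃ 1) := by
    rcases mul_eq_zero.mp key1 with h | h
    · exact absurd h (ne_of_gt hε0)
    · linarith
  obtain ⟨hq0, hq1, hquad, hz3abs⟩ := C3_coords ht hw₃.1
  have hfac : 0 < 3 - 3*ε + ε^2 := by nlinarith
  have hm₁pos : 0 < u₂ 1 - w₃ 1 := by nlinarith [key1']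
  -- the limit inequality
  have hcos : Tendsto (fun k => Real.cos (t k)) atTop (nhds 0) := by
    have hc' := (Real.continuous_cos.tendsto (π/2)).comp ht.2.2
    rw [Real.cos_pi_div_two] at hc'
    exact hc'
  have hsin : Tendsto (fun k => Real.sin (t k)) atTop (nhds 1) := by
    have hs' := (Real.continuous_sin.tendsto (π/2)).comp ht.2.2
    rw [Real.sin_pi_div_two] at hs'
    exact hs'
  have hgtends : Tendsto
      (fun k => (u₂ 0 - w₃ 0) * Real.cos (t k) + (u₂ 1 - w₃ 1) * Real.sin (t k))
      atTop (nhds ((u₂ 0 - w₃ 0) * 0 + (u₂ 1 - w₃ 1) * 1)) :=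
    (tendsto_const_nhds.mul hcos).add (tendsto_const_nhds.mul hsin)
  have hF2 : (u₂ 1 - w₃ 1) ≤ (u₂ 0 - w₃ 0) * w₃ 0 + (u₂ 1 - w₃ 1) * w₃ 1 := by
    have := le_of_tendsto hgtends (eventually_atTop.mpr ⟨1, fun k hk => hF1 k hk⟩)
    linarith
  have hx₃0 : x₃ 0 = w₃ 0 := by
    rw [hx₃c, PiLp.sub_apply, hΔ0, sub_zero]
  have hx₃1 : x₃ 1 = w₃ 1 := by
    rw [hx₃c, PiLp.sub_apply, hΔ1, sub_zero]
  have hx₃2 : x₃ 2 = w₃ 2 - (u₃ - v₃) 2 := by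
    rw [hx₃c, PiLp.sub_apply]
  rcases le_or_gt (u₂ 0 - w₃ 0) 0 with hm0 | hm0
  · exact caseA_lemma hε0 hε1 hq0 hq1 hquad key0' hm₁pos hF2 hm0
  rcases le_or_gt ((u₂ 0 - w₃ 0) * w₃ 0 + (u₂ 1 - w₃ 1) * w₃ 1) (u₂ 1 - w₃ 1) with hc | hc
  · exact caseB1_lemma ht hm0 hm₁pos hc hF1
  · exact caseB2_lemma ht hw₃.1 hx₃.1 hδ hx₃0 hx₃1 hx₃2 hm0 hm₁pos hc hF1


/-! ### Uniqueness of the cycle -/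

lemma cycle_unique {t : ℕ → ℝ} (ht : Admissible t) {ε : ℝ} (hε : ε ∈ Set.Ioo (0 : ℝ) 1)
    {u₁ u₂ u₃ v₁ v₂ v₃ : E3}
    (h : IsCycle C1 C2 (C3 t) ε u₁ u₂ u₃) (h' : IsCycle C1 C2 (C3 t) ε v₁ v₂ v₃) :
    u₁ = v₁ ∧ u₂ = v₂ ∧ u₃ = v₃ := by
  obtain ⟨hε0, hε1⟩ := hε
  obtain ⟨w₁, w₂, w₃, hw₁, hw₂, hw₃, he₁, he₂, he₃⟩ := h
  obtain ⟨x₁, x₂, x₃, hx₁, hx₂, hx₃, hf₁, hf₂, hf₃⟩ := h'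
  have hκ : 0 < ε * (2 - ε) := by nlinarith
  -- the three averaged-projection inequalities
  have A1 : ‖u₁ - v₁‖^2 ≤ ‖u₃ - v₃‖^2 - ε*(2-ε)*‖(u₃ - w₁) - (v₃ - x₁)‖^2 := by
    rw [he₁, hf₁]; exact relax_sq_le hw₁ hx₁ hε0
  have A2 : ‖u₂ - v₂‖^2 ≤ ‖u₁ - v₁‖^2 - ε*(2-ε)*‖(u₁ - w₂) - (v₁ - x₂)‖^2 := by
    rw [he₂, hf₂]; exact relax_sq_le hw₂ hx₂ hε0
  have A3 : ‖u₃ - v₃‖^2 ≤ ‖u₂ - v₂‖^2 - ε*(2-ε)*‖(u₂ - w₃) - (v₂ - x₃)‖^2 := by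
    rw [he₃, hf₃]; exact relax_sq_le hw₃ hx₃ hε0
  have hn : (0:ℝ) ≤ ‖(u₃ - w₁) - (v₃ - x₁)‖^2 := sq_nonneg _
  have hn2 : (0:ℝ) ≤ ‖(u₁ - w₂) - (v₁ - x₂)‖^2 := sq_nonneg _
  have hn3 : (0:ℝ) ≤ ‖(u₂ - w₃) - (v₂ - x₃)‖^2 := sq_nonneg _
  have hsum : ε*(2-ε)*‖(u₃ - w₁) - (v₃ - x₁)‖^2 + ε*(2-ε)*‖(u₁ - w₂) - (v₁ - x₂)‖^2
      + ε*(2-ε)*‖(u₂ - w₃) - (v₂ - x₃)‖^2 ≤ 0 := by linarith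
  have hzgen : ∀ v : E3, ε*(2-ε)*‖v‖^2 ≤ 0 → v = 0 := by
    intro v hv
    have h1 : ε*(2-ε)*‖v‖^2 ≤ ε*(2-ε)*0 := by rw [mul_zero]; exact hv
    have h2 : ‖v‖^2 ≤ 0 := le_of_mul_le_mul_left h1 hκ
    have h3 : ‖v‖^2 = 0 := le_antisymm h2 (sq_nonneg _)
    have h4 : ‖v‖ = 0 := by
      have := (pow_eq_zero_iff (n := 2) (by norm_num)).mp h3
      exact this
    exact norm_eq_zero.mp h4
  have hz1 : (u₃ - w₁) - (v₃ - x₁) = 0 := by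
    apply hzgen
    nlinarith [mul_nonneg hκ.le hn2, mul_nonneg hκ.le hn3]
  have hz2 : (u₁ - w₂) - (v₁ - x₂) = 0 := by
    apply hzgen
    nlinarith [mul_nonneg hκ.le hn, mul_nonneg hκ.le hn3]
  have hz3 : (u₂ - w₃) - (v₂ - x₃) = 0 := by
    apply hzgen
    nlinarith [mul_nonneg hκ.le hn, mul_nonneg hκ.le hn2]
  -- the differences all agree
  have d1 : u₁ - v₁ = u₃ - v₃ := by
    have hh : u₁ - v₁ = (u₃ - v₃) - ε • ((u₃ - w₁) - (v₃ - x₁)) := by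
      rw [he₁, hf₁]; module
    rw [hh, hz1, smul_zero, sub_zero]
  have d2 : u₂ - v₂ = u₃ - v₃ := by
    have hh : u₂ - v₂ = (u₁ - v₁) - ε • ((u₁ - w₂) - (v₁ - x₂)) := by
      rw [he₂, hf₂]; module
    rw [hh, hz2, smul_zero, sub_zero, d1]
  have dw1 : w₁ - x₁ = u₃ - v₃ := by
    have hh : w₁ - x₁ = (u₃ - v₃) - ((u₃ - w₁) - (v₃ - x₁)) := by module
    rw [hh, hz1, sub_zero]
  have dw3 : w₃ - x₃ = u₃ - v₃ := by
    have hh : w₃ - x₃ = (u₂ - v₂) - ((u₂ - w₃) - (v₂ - x₃)) := by module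
    rw [hh, hz3, sub_zero, d2]
  -- coordinates of the common difference
  have hΔ0 : (u₃ - v₃) 0 = 0 := by
    rw [← dw1, PiLp.sub_apply, (C1_coords hw₁.1).1, (C1_coords hx₁.1).1]
    ring
  have hΔ1 : (u₃ - v₃) 1 = 0 := by
    rw [← dw1, PiLp.sub_apply, (C1_coords hw₁.1).2, (C1_coords hx₁.1).2]
    ring
  by_cases hδ : (u₃ - v₃) 2 = 0
  · -- the two cycles coincide
    have hΔ : u₃ - v₃ = 0 := by
      ext i
      fin_cases i
      · exact hΔ0
      · exact hΔ1
      · exact hδ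
    have h3 : u₃ = v₃ := by rwa [sub_eq_zero] at hΔ
    have h1 : u₁ = v₁ := by rw [hΔ] at d1; rwa [sub_eq_zero] at d1
    have h2 : u₂ = v₂ := by rw [hΔ] at d2; rwa [sub_eq_zero] at d2
    exact ⟨h1, h2, h3⟩
  · -- contradiction
    exfalso
    exact uniq_contradiction ht hε0 hε1 hw₁ hw₂ hw₃ hx₁ hx₂ hx₃ he₁ he₂ he₃ hf₁ hf₂ hf₃
      d2 dw3 hΔ0 hΔ1 hδ

theorem stmt6 (t : ℕ → ℝ) (ht : Admissible t) (ε : ℝ) (hε : ε ∈ Set.Ioo (0 : ℝ) 1) :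
    ∃! u : E3 × E3 × E3, IsCycle C1 C2 (C3 t) ε u.1 u.2.1 u.2.2 := by
  obtain ⟨u₁, u₂, u₃, hcyc⟩ := cycle_exists ht hε
  refine ⟨(u₁, u₂, u₃), hcyc, ?_⟩
  rintro ⟨v₁, v₂, v₃⟩ hv
  obtain ⟨h1, h2, h3⟩ := cycle_unique ht hε hv hcyc
  simp only [Prod.mk.injEq]
  exact ⟨h1, h2, h3⟩
end
end

section
/- Let k ≥ 1, let d_k = (v_{k+1} − v_k)/‖v_{k+1} − v_k‖, and let c = (1−s)v_k + s·v_{k+1} with s ∈ [0,1). Then ⟨a − c, d_k⟩ > 0, ⟨b − c, d_k⟩ < 0, and ⟨a − c, d_k⟩ + ⟨b − c, d_k⟩ > 0; consequently the quantity ε(c) = 1 + ⟨b − c, d_k⟩/⟨a − c, d_k⟩ is well defined and lies in the open interval (0,1). -/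
noncomputable section
open Real Filter

set_option maxHeartbeats 2000000 in
theorem stmt8 (t : ℕ → ℝ) (ht : Admissible t) (k : ℕ) (hk : 1 ≤ k)
    (s : ℝ) (hs : s ∈ Set.Ico (0 : ℝ) 1) :
    let d : E2 := ‖vSeq t (k + 1) - vSeq t k‖⁻¹ • (vSeq t (k + 1) - vSeq t k)
    let c : E2 := (1 - s) • vSeq t k + s • vSeq t (k + 1)
    0 < ip (aPt - c) d ∧ ip (bPt - c) d < 0 ∧ 0 < ip (aPt - c) d + ip (bPt - c) d ∧
      1 + ip (bPt - c) d / ip (aPt - c) d ∈ Set.Ioo (0 : ℝ) 1 := by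
  intro d c
  obtain ⟨hmono, h1, hlim⟩ := ht
  -- Basic facts about the angles
  have hub : ∀ j, 1 ≤ j → t j ≤ π / 2 := by
    intro j hj
    refine ge_of_tendsto hlim ?_
    filter_upwards [Filter.eventually_ge_atTop j] with m hm
    exact hmono.monotoneOn hj (le_trans hj hm) hm
  have hlo : π / 4 ≤ t k := h1 ▸ hmono.monotoneOn (le_refl 1) hk hk
  have hlt : t k < t (k + 1) := hmono hk (le_trans hk (Nat.le_succ k)) (Nat.lt_succ_self k)
  have hub2 : t (k + 1) < π / 2 :=
    lt_of_lt_of_le (hmono (Set.mem_Ici.mpr (by omega)) (Set.mem_Ici.mpr (by omega)) (by omega))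
      (hub (k + 2) (by omega))
  have hpi : (0:ℝ) < π := Real.pi_pos
  set x := Real.cos (t k) with hx
  set y := Real.sin (t k) with hy
  set x' := Real.cos (t (k + 1)) with hx'
  set y' := Real.sin (t (k + 1)) with hy'
  -- inequalities among x, y, x', y'
  have hX : x' < x := by
    apply Real.cos_lt_cos_of_nonneg_of_le_pi (by linarith) (by linarith) hlt
  have hY : y < y' := by
    apply Real.strictMonoOn_sin (by constructor <;> linarith) (by constructor <;> linarith) hlt
  have hx'pos : 0 < x' := Real.cos_pos_of_mem_Ioo ⟨by linarith, hub2⟩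
  have hy'1 : y' ≤ 1 := Real.sin_le_one _
  have hy1 : y ≤ 1 := Real.sin_le_one _
  have hxy : x ≤ y := by
    rw [hx, hy, ← Real.sin_pi_div_two_sub]
    apply Real.strictMonoOn_sin.monotoneOn (by constructor <;> linarith)
      (by constructor <;> linarith) (by linarith)
  have hxy' : x' ≤ y' := by
    rw [hx', hy', ← Real.sin_pi_div_two_sub]
    apply Real.strictMonoOn_sin.monotoneOn (by constructor <;> linarith)
      (by constructor <;> linarith) (by linarith)
  have hsum : x' + y' < x + y := by
    have h2 : Real.cos (t (k+1) - π/4) < Real.cos (t k - π/4) :=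
      Real.cos_lt_cos_of_nonneg_of_le_pi (by linarith) (by linarith) (by linarith)
    rw [Real.cos_sub, Real.cos_sub, Real.cos_pi_div_four, Real.sin_pi_div_four] at h2
    have hs2 : (0:ℝ) < Real.sqrt 2 := by positivity
    rw [hx, hy, hx', hy']
    nlinarith [h2, hs2]
  obtain ⟨hs0, hs1⟩ := hs
  -- coordinates
  set c₁ : ℝ := (1 - s) * x + s * x' with hc₁
  set c₂ : ℝ := (1 - s) * y + s * y' with hc₂
  have hc1x' : x' < c₁ := by nlinarith
  have hc2y' : c₂ < y' := by nlinarith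
  have hc12 : c₁ ≤ c₂ := by nlinarith
  -- the unnormalised direction
  set w : E2 := vSeq t (k + 1) - vSeq t k with hw
  have hwne : w ≠ 0 := by
    intro h
    have : w 0 = 0 := by rw [h]; rfl
    have h0 : w 0 = x' - x := rfl
    rw [h0] at this
    linarith
  have hnorm : 0 < ‖w‖⁻¹ := inv_pos.mpr (norm_pos_iff.mpr hwne)
  have hdc : d = ‖w‖⁻¹ • w := rfl
  -- compute the raw inner products
  have hA : ip (aPt - c) w = (-2 - c₁) * (x' - x) + (2 - c₂) * (y' - y) := by
    show (inner ℝ (aPt - c) w : ℝ) = _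
    rw [PiLp.inner_apply, Fin.sum_univ_two]
    have e0 : (aPt - c) 0 = -2 - c₁ := by
      show (-2 : ℝ) - ((1-s) * x + s * x') = _; rw [hc₁]
    have e1 : (aPt - c) 1 = 2 - c₂ := by
      show (2 : ℝ) - ((1-s) * y + s * y') = _; rw [hc₂]
    have f0 : w 0 = x' - x := rfl
    have f1 : w 1 = y' - y := rfl
    rw [e0, e1, f0, f1]; simp [RCLike.inner_apply]; ring
  have hB : ip (bPt - c) w = (2 - c₁) * (x' - x) + (2 - c₂) * (y' - y) := by
    show (inner ℝ (bPt - c) w : ℝ) = _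
    rw [PiLp.inner_apply, Fin.sum_univ_two]
    have e0 : (bPt - c) 0 = 2 - c₁ := by
      show (2 : ℝ) - ((1-s) * x + s * x') = _; rw [hc₁]
    have e1 : (bPt - c) 1 = 2 - c₂ := by
      show (2 : ℝ) - ((1-s) * y + s * y') = _; rw [hc₂]
    have f0 : w 0 = x' - x := rfl
    have f1 : w 1 = y' - y := rfl
    rw [e0, e1, f0, f1]; simp [RCLike.inner_apply]; ring
  have hAd : ip (aPt - c) d = ‖w‖⁻¹ * ((-2 - c₁) * (x' - x) + (2 - c₂) * (y' - y)) := by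
    rw [hdc]; show (inner ℝ (aPt - c) (‖w‖⁻¹ • w) : ℝ) = _
    rw [real_inner_smul_right]; rw [← hA]; rfl
  have hBd : ip (bPt - c) d = ‖w‖⁻¹ * ((2 - c₁) * (x' - x) + (2 - c₂) * (y' - y)) := by
    rw [hdc]; show (inner ℝ (bPt - c) (‖w‖⁻¹ • w) : ℝ) = _
    rw [real_inner_smul_right]; rw [← hB]; rfl
  clear_value d c w x y x' y' c₁ c₂
  clear hdc hw hA hB
  -- the key sign facts
  have hApos : 0 < ip (aPt - c) d := by
    rw [hAd]
    apply mul_pos hnorm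
    nlinarith [mul_pos (show (0:ℝ) < 2 + c₁ by linarith) (show (0:ℝ) < x - x' by linarith),
      mul_pos (show (0:ℝ) < 2 - c₂ by linarith) (show (0:ℝ) < y' - y by linarith)]
  have hBneg : ip (bPt - c) d < 0 := by
    rw [hBd]
    have : (2 - c₁) * (x' - x) + (2 - c₂) * (y' - y) < 0 := by
      nlinarith [mul_nonneg (show (0:ℝ) ≤ c₂ - c₁ by linarith) (show (0:ℝ) ≤ x - x' by linarith),
        mul_pos (show (0:ℝ) < 2 - c₂ by linarith) (show (0:ℝ) < (x + y) - (x' + y') by linarith)]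
    nlinarith [hnorm]
  have hABpos : 0 < ip (aPt - c) d + ip (bPt - c) d := by
    rw [hAd, hBd]
    have h0c1 : 0 < c₁ := by nlinarith
    have : 0 < ((-2 - c₁) * (x' - x) + (2 - c₂) * (y' - y))
        + ((2 - c₁) * (x' - x) + (2 - c₂) * (y' - y)) := by
      nlinarith [mul_pos h0c1 (show (0:ℝ) < x - x' by linarith),
        mul_pos (show (0:ℝ) < 2 - c₂ by linarith) (show (0:ℝ) < y' - y by linarith)]
    nlinarith [hnorm]
  refine ⟨hApos, hBneg, hABpos, ?_, ?_⟩
  · have : -1 < ip (bPt - c) d / ip (aPt - c) d := by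
      rw [lt_div_iff₀ hApos]; linarith
    linarith
  · have : ip (bPt - c) d / ip (aPt - c) d < 0 := div_neg_of_neg_of_pos hBneg hApos
    linarith
end
end

section
/- Let k ≥ 1, let d_k = (v_{k+1} − v_k)/‖v_{k+1} − v_k‖, and for s ∈ [0,1) set ε_k(s) = 1 + ⟨b − c(s), d_k⟩/⟨a − c(s), d_k⟩ where c(s) = (1−s)v_k + s·v_{k+1}. Then: (i) for each k the function s ↦ ε_k(s) is strictly decreasing on [0,1); and (ii) the suprema over the segments tend to zero, i.e. ε_k(0) → 0 as k → ∞. -/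
noncomputable section
open Real Filter

/-- Numerator helper. -/
def Nf (cθ sθ cφ sφ s : ℝ) : ℝ :=
  (2 - ((1-s)*cθ + s*cφ))*(cφ-cθ) + (2 - ((1-s)*sθ + s*sφ))*(sφ-sθ)

/-- Denominator helper. -/
def Df (cθ sθ cφ sφ s : ℝ) : ℝ :=
  (-2 - ((1-s)*cθ + s*cφ))*(cφ-cθ) + (2 - ((1-s)*sθ + s*sφ))*(sφ-sθ)

lemma Df_pos {cθ sθ cφ sφ s : ℝ} (hc : cφ < cθ) (hcφ : -2 < cφ) (hcθ : cθ ≤ 2)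
    (hs : sθ < sφ) (hsφ : sφ ≤ 2) (h0 : 0 ≤ s) (h1 : s < 1) :
    0 < Df cθ sθ cφ sφ s := by
  have hPθ : 0 < (2+cθ)*(cθ-cφ) + (2-sθ)*(sφ-sθ) :=
    add_pos (mul_pos (by linarith) (by linarith)) (mul_pos (by linarith) (by linarith))
  have hPφ : 0 < (2+cφ)*(cθ-cφ) + (2-sφ)*(sφ-sθ) :=
    add_pos_of_pos_of_nonneg (mul_pos (by linarith) (by linarith))
      (mul_nonneg (by linarith) (by linarith))
  have hid : Df cθ sθ cφ sφ s
      = (1-s)*((2+cθ)*(cθ-cφ) + (2-sθ)*(sφ-sθ)) + s*((2+cφ)*(cθ-cφ) + (2-sφ)*(sφ-sθ)) := by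
    unfold Df; ring
  rw [hid]
  have := mul_pos (by linarith : (0:ℝ) < 1-s) hPθ
  have := mul_nonneg h0 hPφ.le
  linarith

set_option maxHeartbeats 1000000 in
theorem stmt9 (t : ℕ → ℝ) (ht : Admissible t) :
    let εf : ℕ → ℝ → ℝ := fun k s =>
      1 + ip (bPt - ((1 - s) • vSeq t k + s • vSeq t (k + 1)))
            (‖vSeq t (k + 1) - vSeq t k‖⁻¹ • (vSeq t (k + 1) - vSeq t k)) /
          ip (aPt - ((1 - s) • vSeq t k + s • vSeq t (k + 1)))
            (‖vSeq t (k + 1) - vSeq t k‖⁻¹ • (vSeq t (k + 1) - vSeq t k))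
    (∀ k, 1 ≤ k → StrictAntiOn (εf k) (Set.Ico 0 1)) ∧
      Tendsto (fun k => εf k 0) atTop (nhds 0) := by
  obtain ⟨hmono, ht1, hlim⟩ := ht
  intro εf
  have hεf : εf = fun k s =>
      1 + ip (bPt - ((1 - s) • vSeq t k + s • vSeq t (k + 1)))
            (‖vSeq t (k + 1) - vSeq t k‖⁻¹ • (vSeq t (k + 1) - vSeq t k)) /
          ip (aPt - ((1 - s) • vSeq t k + s • vSeq t (k + 1)))
            (‖vSeq t (k + 1) - vSeq t k‖⁻¹ • (vSeq t (k + 1) - vSeq t k)) := rfl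
  -- basic consequences of admissibility
  have hlt : ∀ k, 1 ≤ k → t k < t (k+1) := fun k hk =>
    hmono hk (Set.mem_Ici.2 (by omega)) (Nat.lt_succ_self k)
  have hlb : ∀ k, 1 ≤ k → π/4 ≤ t k := by
    intro k hk
    rcases eq_or_lt_of_le hk with h | h
    · rw [← h, ht1]
    · rw [← ht1]; exact (hmono (Set.mem_Ici.2 le_rfl) hk h).le
  have hub : ∀ k, 1 ≤ k → t k < π/2 := by
    intro k hk
    have h2 : t (k+1) ≤ π/2 := by
      refine ge_of_tendsto hlim (eventually_atTop.2 ⟨k+1, fun j hj => ?_⟩)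
      exact hmono.monotoneOn (Set.mem_Ici.2 (by omega)) (Set.mem_Ici.2 (by omega)) hj
    linarith [hlt k hk]
  have hpi : (0:ℝ) < π := Real.pi_pos
  -- per-k trig facts
  have hfacts : ∀ k, 1 ≤ k →
      cos (t (k+1)) < cos (t k) ∧ sin (t k) < sin (t (k+1)) ∧ 0 < cos (t (k+1)) ∧
      0 < cos (t k) ∧ 1/2 ≤ sin (t k) ∧ sin (t (k+1)) ≤ 1 ∧ cos (t k) ≤ 1 := by
    intro k hk
    have h1 := hlb k hk
    have h2 := hub k hk
    have h3 := hlt k hk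
    have h4 : t (k+1) < π/2 := hub (k+1) (by omega)
    refine ⟨Real.cos_lt_cos_of_nonneg_of_le_pi (by linarith) (by linarith) h3,
      Real.strictMonoOn_sin ⟨by linarith, by linarith⟩ ⟨by linarith, by linarith⟩ h3,
      Real.cos_pos_of_mem_Ioo ⟨by linarith, h4⟩,
      Real.cos_pos_of_mem_Ioo ⟨by linarith, h2⟩, ?_,
      Real.sin_le_one _, Real.cos_le_one _⟩
    have h5 : sin (π/4) ≤ sin (t k) :=
      Real.strictMonoOn_sin.monotoneOn ⟨by linarith, by linarith⟩ ⟨by linarith, by linarith⟩ h1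
    rw [Real.sin_pi_div_four] at h5
    nlinarith [Real.sq_sqrt (by norm_num : (2:ℝ) ≥ 0), Real.sqrt_nonneg 2]
  -- value of εf in terms of Nf/Df
  have hval : ∀ k, 1 ≤ k → ∀ s : ℝ, εf k s =
      1 + Nf (cos (t k)) (sin (t k)) (cos (t (k+1))) (sin (t (k+1))) s /
          Df (cos (t k)) (sin (t k)) (cos (t (k+1))) (sin (t (k+1))) s := by
    intro k hk s
    set w : E2 := vSeq t (k + 1) - vSeq t k with hw
    have hw1 : w 1 = sin (t (k+1)) - sin (t k) := by simp [hw, vSeq]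
    have hwne : w ≠ 0 := by
      intro h
      rw [h] at hw1
      have := (hfacts k hk).2.1
      simp at hw1
      linarith
    have hcne : ‖w‖⁻¹ ≠ 0 := inv_ne_zero (norm_ne_zero_iff.2 hwne)
    have hB : (inner ℝ (bPt - ((1 - s) • vSeq t k + s • vSeq t (k + 1))) w : ℝ)
        = Nf (cos (t k)) (sin (t k)) (cos (t (k+1))) (sin (t (k+1))) s := by
      simp [hw, PiLp.inner_apply, Fin.sum_univ_two, RCLike.inner_apply, bPt, vSeq, Nf] <;> ring
    have hA : (inner ℝ (aPt - ((1 - s) • vSeq t k + s • vSeq t (k + 1))) w : ℝ)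
        = Df (cos (t k)) (sin (t k)) (cos (t (k+1))) (sin (t (k+1))) s := by
      simp [hw, PiLp.inner_apply, Fin.sum_univ_two, RCLike.inner_apply, aPt, vSeq, Df] <;> ring
    rw [hεf]
    simp only [ip, ← hw]
    rw [real_inner_smul_right, real_inner_smul_right, mul_div_mul_left _ _ hcne, hA, hB]
  constructor
  · -- strict antitonicity
    intro k hk s₁ hs₁ s₂ hs₂ h12
    obtain ⟨hc, hs, hcφ, hcθ, hsθ, hsφ, hcθ1⟩ := hfacts k hk
    rw [hval k hk s₁, hval k hk s₂]
    set cθ := cos (t k); set sθ := sin (t k); set cφ := cos (t (k+1)); set sφ := sin (t (k+1))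
    have hD1 : 0 < Df cθ sθ cφ sφ s₁ :=
      Df_pos hc (by linarith) (by linarith) hs (by linarith) hs₁.1 hs₁.2
    have hD2 : 0 < Df cθ sθ cφ sφ s₂ :=
      Df_pos hc (by linarith) (by linarith) hs (by linarith) hs₂.1 hs₂.2
    have hid : Nf cθ sθ cφ sφ s₁ * Df cθ sθ cφ sφ s₂ - Nf cθ sθ cφ sφ s₂ * Df cθ sθ cφ sφ s₁
        = 4*(cθ-cφ)*(s₂-s₁)*((cφ-cθ)^2+(sφ-sθ)^2) := by
      unfold Nf Df; ring
    have hpos : 0 < 4*(cθ-cφ)*(s₂-s₁)*((cφ-cθ)^2+(sφ-sθ)^2) := by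
      have h1 : 0 < (cφ-cθ)^2+(sφ-sθ)^2 := by nlinarith [sq_nonneg (sφ-sθ)]
      have h2 : 0 < 4*(cθ-cφ)*(s₂-s₁) := by nlinarith
      exact mul_pos h2 h1
    apply add_lt_add_right
    rw [div_lt_div_iff₀ hD2 hD1]
    linarith
  · -- convergence to 0
    have hcos : Tendsto (fun k => 5 * cos (t k)) atTop (nhds 0) := by
      have h1 : Tendsto (fun k => cos (t k)) atTop (nhds (cos (π/2))) :=
        (Real.continuous_cos.tendsto _).comp hlim
      rw [Real.cos_pi_div_two] at h1
      simpa using h1.const_mul 5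
    refine tendsto_of_tendsto_of_tendsto_of_le_of_le' tendsto_const_nhds hcos ?_ ?_
    · filter_upwards [eventually_ge_atTop 1] with k hk
      obtain ⟨hc, hs, hcφ, hcθ, hsθ, hsφ, hcθ1⟩ := hfacts k hk
      rw [hval k hk 0]
      set cθ := cos (t k); set sθ := sin (t k); set cφ := cos (t (k+1)); set sφ := sin (t (k+1))
      have hD : 0 < Df cθ sθ cφ sφ 0 :=
        Df_pos hc (by linarith) (by linarith) hs (by linarith) le_rfl one_pos
      have he : 1 + Nf cθ sθ cφ sφ 0 / Df cθ sθ cφ sφ 0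
          = (Df cθ sθ cφ sφ 0 + Nf cθ sθ cφ sφ 0) / Df cθ sθ cφ sφ 0 := by
        field_simp
      rw [he]
      apply div_nonneg _ hD.le
      have h1 : 0 ≤ cθ*(cθ-cφ) := mul_nonneg hcθ.le (by linarith)
      have h2 : 0 ≤ (4-2*sθ)*(sφ-sθ) := mul_nonneg (by linarith) (by linarith)
      unfold Nf Df; nlinarith
    · filter_upwards [eventually_ge_atTop 1] with k hk
      obtain ⟨hc, hs, hcφ, hcθ, hsθ, hsφ, hcθ1⟩ := hfacts k hk
      rw [hval k hk 0]
      set cθ := cos (t k); set sθ := sin (t k); set cφ := cos (t (k+1)); set sφ := sin (t (k+1))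
      have hpθ : sθ^2 + cθ^2 = 1 := Real.sin_sq_add_cos_sq _
      have hpφ : sφ^2 + cφ^2 = 1 := Real.sin_sq_add_cos_sq _
      have hD : 0 < Df cθ sθ cφ sφ 0 :=
        Df_pos hc (by linarith) (by linarith) hs (by linarith) le_rfl one_pos
      have he : 1 + Nf cθ sθ cφ sφ 0 / Df cθ sθ cφ sφ 0
          = (Df cθ sθ cφ sφ 0 + Nf cθ sθ cφ sφ 0) / Df cθ sθ cφ sφ 0 := by
        field_simp
      rw [he, div_le_iff₀ hD]
      have hCS : cθ*cφ + sθ*sφ ≤ 1 := by nlinarith [sq_nonneg (cθ-cφ), sq_nonneg (sθ-sφ)]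
      have hkey : sθ*(sφ-sθ) ≤ cθ*(cθ-cφ) := by nlinarith
      have h2 : sφ - sθ ≤ 2*cθ*(cθ-cφ) := by
        nlinarith [mul_nonneg (by linarith : (0:ℝ) ≤ 2*sθ-1) (by linarith : (0:ℝ) ≤ sφ-sθ)]
      unfold Nf Df
      nlinarith [h2, mul_nonneg hcθ.le (by linarith : (0:ℝ) ≤ sφ-sθ),
        mul_nonneg hcθ.le (by linarith : (0:ℝ) ≤ cθ-cφ),
        mul_nonneg (mul_nonneg hcθ.le hcθ.le) (by linarith : (0:ℝ) ≤ cθ-cφ),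
        mul_nonneg (mul_nonneg hcθ.le (by linarith : (0:ℝ) ≤ 2-sθ)) (by linarith : (0:ℝ) ≤ sφ-sθ),
        mul_nonneg (by linarith : (0:ℝ) ≤ sθ) (by linarith : (0:ℝ) ≤ sφ-sθ)]
end
end

section
/- Let C₁, C₂, C₃ be nonempty closed convex subsets of a Euclidean space, let ε ∈ (0,1], and let (u₁,u₂,u₃) be an ε-cycle for (C₁,C₂,C₃) with support (w₁,w₂,w₃). Then u₁ = ((1−ε)²w₂ + (1−ε)w₃ + w₁)/(ε²−3ε+3), u₂ = ((1−ε)²w₃ + (1−ε)w₁ + w₂)/(ε²−3ε+3), and u₃ = ((1−ε)²w₁ + (1−ε)w₂ + w₃)/(ε²−3ε+3). -/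
noncomputable section
open Real Filter

theorem stmt10 {E : Type} [NormedAddCommGroup E] [InnerProductSpace ℝ E]
    [FiniteDimensional ℝ E] (C₁ C₂ C₃ : Set E)
    (h₁ : C₁.Nonempty ∧ IsClosed C₁ ∧ Convex ℝ C₁)
    (h₂ : C₂.Nonempty ∧ IsClosed C₂ ∧ Convex ℝ C₂)
    (h₃ : C₃.Nonempty ∧ IsClosed C₃ ∧ Convex ℝ C₃)
    (ε : ℝ) (hε : ε ∈ Set.Ioc (0 : ℝ) 1) (u₁ u₂ u₃ w₁ w₂ w₃ : E)
    (hc : IsCycleWithSupport C₁ C₂ C₃ ε u₁ u₂ u₃ w₁ w₂ w₃) :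
    u₁ = (ε ^ 2 - 3 * ε + 3)⁻¹ • ((1 - ε) ^ 2 • w₂ + (1 - ε) • w₃ + w₁) ∧
    u₂ = (ε ^ 2 - 3 * ε + 3)⁻¹ • ((1 - ε) ^ 2 • w₃ + (1 - ε) • w₁ + w₂) ∧
    u₃ = (ε ^ 2 - 3 * ε + 3)⁻¹ • ((1 - ε) ^ 2 • w₁ + (1 - ε) • w₂ + w₃) := by
  obtain ⟨_, _, _, e1, e2, e3⟩ := hc
  obtain ⟨hε0, hε1⟩ := hε
  have hd : ε ^ 2 - 3 * ε + 3 ≠ 0 := by nlinarith [sq_nonneg (ε - 3/2)]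
  have hinj := smul_right_injective E (ne_of_gt hε0)
  refine ⟨?_, ?_, ?_⟩ <;> rw [eq_inv_smul_iff₀ hd] <;> apply hinj
  · linear_combination (norm := module) e1 + (1-ε) • e3 + (1-ε)^2 • e2
  · linear_combination (norm := module) e2 + (1-ε) • e1 + (1-ε)^2 • e3
  · linear_combination (norm := module) e3 + (1-ε) • e2 + (1-ε)^2 • e1
end
end

section
/- The image of C₃ under the projection (x,y,z) ↦ (x,y) onto the xy-plane equals C₃'; that is, {(x,y) ∈ ℝ² : ∃ z ∈ ℝ, (x,y,z) ∈ C₃} = C₃'. -/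
noncomputable section
open Real Filter

def Lmap : E3 →ₗ[ℝ] E2 where
  toFun x := WithLp.toLp 2 ![x 0, x 1]
  map_add' x y := by
    ext i; fin_cases i <;>
      simp [Matrix.cons_val_zero, Matrix.cons_val_one, Matrix.head_cons]
  map_smul' c x := by
    ext i; fin_cases i <;>
      simp [Matrix.cons_val_zero, Matrix.cons_val_one, Matrix.head_cons]

lemma Lmap_pSeq (t : ℕ → ℝ) (k : ℕ) : Lmap (pSeq t k) = vSeq t k := by
  ext i; fin_cases i <;> simp [Lmap, pSeq, vSeq]

lemma pSeq_mem_ball (t : ℕ → ℝ) (k : ℕ) : pSeq t k ∈ Metric.closedBall (0 : E3) 2 := by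
  rw [Metric.mem_closedBall, dist_zero_right]
  have h1 : ((-1 : ℝ) ^ k) ^ 2 = 1 := by
    rw [← pow_mul, mul_comm, pow_mul]; simp
  have : ‖pSeq t k‖ = Real.sqrt 2 := by
    rw [EuclideanSpace.norm_eq]
    congr 1
    simp [pSeq, Fin.sum_univ_three, h1]
    nlinarith [Real.sin_sq_add_cos_sq (t k)]
  rw [this]
  nlinarith [Real.sqrt_nonneg 2, Real.sq_sqrt (by norm_num : (0:ℝ) ≤ 2)]

theorem stmt12 (t : ℕ → ℝ) (ht : Admissible t) :
    {q : E2 | ∃ z : ℝ, (WithLp.toLp 2 ![q 0, q 1, z] : E3) ∈ C3 t} = C3' t := by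
  
  have hcont : Continuous Lmap := Lmap.continuous_of_finiteDimensional
  have hset : {q : E2 | ∃ z : ℝ, (WithLp.toLp 2 ![q 0, q 1, z] : E3) ∈ C3 t} = Lmap '' C3 t := by
    ext q
    constructor
    · rintro ⟨z, hz⟩
      refine ⟨WithLp.toLp 2 ![q 0, q 1, z], hz, ?_⟩
      ext i; fin_cases i <;> simp [Lmap]
    · rintro ⟨x, hx, rfl⟩
      refine ⟨x 2, ?_⟩
      have : (WithLp.toLp 2 ![Lmap x 0, Lmap x 1, x 2] : E3) = x := by
        ext i; fin_cases i <;> simp [Lmap]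
      rwa [this]
  rw [hset]
  have himg : Lmap '' convexHull ℝ (pSeq t '' {k | 1 ≤ k})
      = convexHull ℝ (vSeq t '' {k | 1 ≤ k}) := by
    rw [Lmap.image_convexHull]
    congr 1
    rw [← Set.image_comp]
    exact Set.image_congr fun k _ => Lmap_pSeq t k
  have hcompact : IsCompact (C3 t) := by
    apply Metric.isCompact_of_isClosed_isBounded isClosed_closure
    apply Bornology.IsBounded.closure
    apply (Metric.isBounded_closedBall (x := (0:E3)) (r := 2)).subset
    apply convexHull_min _ (convex_closedBall _ _)
    rintro x ⟨k, _, rfl⟩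
    exact pSeq_mem_ball t k
  apply Set.Subset.antisymm
  · calc Lmap '' C3 t ⊆ closure (Lmap '' convexHull ℝ (pSeq t '' {k | 1 ≤ k})) :=
          image_closure_subset_closure_image hcont
      _ = C3' t := by rw [himg]; rfl
  · have hclosed : IsClosed (Lmap '' C3 t) := (hcompact.image hcont).isClosed
    apply closure_minimal _ hclosed
    rw [← himg]
    exact Set.image_mono subset_closure
end
end

section
/- For every k ≥ 1 and every s ∈ [0,1], letting c = (1−s)v_k + s·v_{k+1} ∈ ℝ², the vertical fiber of C₃ over c is a single point: {z ∈ ℝ : (c₁, c₂, z) ∈ C₃} = {(1−s)(−1)^k + s(−1)^{k+1}}. -/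
noncomputable section
open Real Filter

lemma t_ge (t : ℕ → ℝ) (ht : Admissible t) (j : ℕ) (hj : 1 ≤ j) : π/4 ≤ t j := by
  rcases eq_or_lt_of_le hj with h | h
  · rw [← h, ht.2.1]
  · exact ht.2.1 ▸ (ht.1 (Set.mem_Ici.2 le_rfl) (Set.mem_Ici.2 hj) h).le

lemma t_lt (t : ℕ → ℝ) (ht : Admissible t) (j : ℕ) (hj : 1 ≤ j) : t j < π/2 := by
  have h1 : t j < t (j+1) := ht.1 (Set.mem_Ici.2 hj) (Set.mem_Ici.2 (by omega)) (by omega)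
  have h2 : t (j+1) ≤ π/2 := by
    refine ge_of_tendsto ht.2.2 (eventually_atTop.2 ⟨j+1, fun m hm => ?_⟩)
    exact ht.1.monotoneOn (Set.mem_Ici.2 (by omega)) (Set.mem_Ici.2 (by omega)) hm
  linarith

lemma support (t : ℕ → ℝ) (α β γ m : ℝ)
    (h : ∀ j, 1 ≤ j → α * cos (t j) + β * sin (t j) + γ * (-1)^j ≤ m)
    {x : E3} (hx : x ∈ C3 t) : α * x 0 + β * x 1 + γ * x 2 ≤ m := by
  have hlin : IsLinearMap ℝ (fun x : E3 => α * x 0 + β * x 1 + γ * x 2) :=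
    ⟨fun a b => by simp; ring, fun c a => by simp; ring⟩
  have h0 : Continuous fun x : E3 => x 0 := (EuclideanSpace.proj (0 : Fin 3)).continuous
  have h1 : Continuous fun x : E3 => x 1 := (EuclideanSpace.proj (1 : Fin 3)).continuous
  have h2 : Continuous fun x : E3 => x 2 := (EuclideanSpace.proj (2 : Fin 3)).continuous
  have hcont : Continuous (fun x : E3 => α * x 0 + β * x 1 + γ * x 2) :=
    ((continuous_const.mul h0).add (continuous_const.mul h1)).add (continuous_const.mul h2)
  refine closure_minimal (convexHull_min ?_ (convex_halfSpace_le hlin m))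
    (isClosed_le hcont continuous_const) hx
  rintro _ ⟨j, hj, rfl⟩
  simpa [pSeq, Matrix.cons_val_two, Matrix.tail_cons] using h j hj

lemma key (t : ℕ → ℝ) (ht : Admissible t) (k : ℕ) (hk : 1 ≤ k) (η u : ℝ)
    (hη0 : 0 < η)
    (hη1 : η ≤ (t (k+1) - t k)/4)
    (hη2 : 2*η ≤ t (k+2) - t (k+1))
    (hη3 : 2 ≤ k → 2*η ≤ t k - t (k-1))
    (hu : |u| ≤ η)
    (j : ℕ) (hj : 1 ≤ j) :
    cos ((t k + t (k+1))/2 + u) * cos (t j) + sin ((t k + t (k+1))/2 + u) * sin (t j)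
      + ((-1)^k * sin u * sin ((t (k+1) - t k)/2)) * (-1)^j
      ≤ cos u * cos ((t (k+1) - t k)/2) := by
  have hπ := Real.pi_pos
  have hbk1 := t_ge t ht k hk
  have hbk2 := t_lt t ht k hk
  have hbk1' := t_ge t ht (k+1) (by omega)
  have hbk2' := t_lt t ht (k+1) (by omega)
  have hbj1 := t_ge t ht j hj
  have hbj2 := t_lt t ht j hj
  have hkk : t k < t (k+1) := ht.1 (Set.mem_Ici.2 hk) (Set.mem_Ici.2 (by omega)) (by omega)
  have hu' := abs_le.1 hu
  have hφcos : ∀ x : ℝ, cos ((t k + t (k+1))/2 + u) * cos x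
      + sin ((t k + t (k+1))/2 + u) * sin x = cos ((t k + t (k+1))/2 + u - x) := fun x => by
    rw [Real.cos_sub]
  rw [hφcos]
  by_cases hjk : j = k
  · subst hjk
    have e : (t j + t (j+1))/2 + u - t j = (t (j+1) - t j)/2 + u := by ring
    rw [e, Real.cos_add]
    have hpow : ((-1:ℝ))^(j*2) = 1 := by rw [mul_comm, pow_mul]; norm_num
    refine le_of_eq ?_
    linear_combination (sin ((t (j+1) - t j)/2) * sin u) * hpow
  by_cases hjk1 : j = k + 1
  · subst hjk1
    have e : (t k + t (k+1))/2 + u - t (k+1) = u - (t (k+1) - t k)/2 := by ring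
    rw [e, Real.cos_sub, pow_succ]
    have hpow : ((-1:ℝ))^(k*2) = 1 := by rw [mul_comm, pow_mul]; norm_num
    refine le_of_eq ?_
    linear_combination (- sin u * sin ((t (k+1) - t k)/2)) * hpow
  -- generic case
  have hδ2 : 0 < (t (k+1) - t k)/2 := by linarith
  have hgap : η + (t (k+1) - t k)/2 ≤ |t j - ((t k + t (k+1))/2 + u)| := by
    rcases (by omega : j < k ∨ k + 2 ≤ j) with h | h
    · have hk2 : 2 ≤ k := by omega
      have h3 := hη3 hk2
      have htj : t j ≤ t (k-1) :=
        ht.1.monotoneOn (Set.mem_Ici.2 hj) (Set.mem_Ici.2 (by omega)) (by omega)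
      have hk1k : t (k-1) < t k := ht.1 (Set.mem_Ici.2 (by omega)) (Set.mem_Ici.2 hk) (by omega)
      have : η + (t (k+1) - t k)/2 ≤ ((t k + t (k+1))/2 + u) - t j := by linarith
      calc η + (t (k+1) - t k)/2 ≤ ((t k + t (k+1))/2 + u) - t j := this
        _ ≤ |t j - ((t k + t (k+1))/2 + u)| := by rw [abs_sub_comm]; exact le_abs_self _
    · have htj : t (k+2) ≤ t j :=
        ht.1.monotoneOn (Set.mem_Ici.2 (by omega)) (Set.mem_Ici.2 (by omega)) h
      have : η + (t (k+1) - t k)/2 ≤ t j - ((t k + t (k+1))/2 + u) := by linarith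
      exact this.trans (le_abs_self _)
  have hub : |t j - ((t k + t (k+1))/2 + u)| ≤ π := by
    rw [abs_le]; constructor <;> nlinarith
  have h1 : cos (t j - ((t k + t (k+1))/2 + u)) ≤ cos (η + (t (k+1) - t k)/2) := by
    rw [← Real.cos_abs (t j - _)]
    exact Real.cos_le_cos_of_nonneg_of_le_pi (by linarith) hub hgap
  have h2 : cos (η + (t (k+1) - t k)/2) ≤ cos (|u| + (t (k+1) - t k)/2) := by
    refine Real.cos_le_cos_of_nonneg_of_le_pi (by positivity) ?_ (by linarith)
    nlinarith
  have hsinabs : Real.sin |u| = |Real.sin u| := by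
    rcases abs_cases u with ⟨ha, hb⟩ | ⟨ha, hb⟩
    · rw [ha, abs_of_nonneg (Real.sin_nonneg_of_nonneg_of_le_pi hb (by nlinarith))]
    · rw [ha, Real.sin_neg,
        abs_of_nonpos (Real.sin_nonpos_of_nonpos_of_neg_pi_le hb.le (by nlinarith))]
  have h3 : cos (|u| + (t (k+1) - t k)/2)
      = cos u * cos ((t (k+1) - t k)/2) - |sin u| * sin ((t (k+1) - t k)/2) := by
    rw [Real.cos_add, Real.cos_abs, hsinabs]
  have hsδ : 0 ≤ sin ((t (k+1) - t k)/2) :=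
    (Real.sin_nonneg_of_nonneg_of_le_pi (by linarith) (by nlinarith))
  have h4 : ((-1:ℝ)^k * sin u * sin ((t (k+1) - t k)/2)) * (-1)^j
      ≤ |sin u| * sin ((t (k+1) - t k)/2) := by
    have habs : |((-1:ℝ)^k * sin u * sin ((t (k+1) - t k)/2)) * (-1)^j|
        = |sin u| * sin ((t (k+1) - t k)/2) := by
      rw [abs_mul, abs_mul, abs_mul, abs_pow, abs_pow, abs_neg, abs_one, one_pow, one_pow,
        abs_of_nonneg hsδ]
      ring
    calc _ ≤ |((-1:ℝ)^k * sin u * sin ((t (k+1) - t k)/2)) * (-1)^j| := le_abs_self _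
      _ = _ := habs
  have hcos' : cos (t j - ((t k + t (k+1))/2 + u)) = cos ((t k + t (k+1))/2 + u - t j) := by
    rw [← Real.cos_neg]; ring_nf
  linarith [h1, h2, h4, hcos'.symm.le, hcos'.le]

set_option maxHeartbeats 1000000 in
theorem stmt13 (t : ℕ → ℝ) (ht : Admissible t) (k : ℕ) (hk : 1 ≤ k)
    (s : ℝ) (hs : s ∈ Set.Icc (0 : ℝ) 1) :
    let c : E2 := (1 - s) • vSeq t k + s • vSeq t (k + 1)
    {z : ℝ | (WithLp.toLp 2 ![c 0, c 1, z] : E3) ∈ C3 t} =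
      {(1 - s) * (-1 : ℝ) ^ k + s * (-1 : ℝ) ^ (k + 1)} := by
  intro c
  obtain ⟨hs0, hs1⟩ := hs
  have hπ := Real.pi_pos
  have hkk : t k < t (k+1) := ht.1 (Set.mem_Ici.2 hk) (Set.mem_Ici.2 (by omega)) (by omega)
  have hkk2 : t (k+1) < t (k+2) :=
    ht.1 (Set.mem_Ici.2 (by omega)) (Set.mem_Ici.2 (by omega)) (by omega)
  have hbk1 := t_ge t ht k hk
  have hbk2' := t_lt t ht (k+1) (by omega)
  have hc : c = (1 - s) • vSeq t k + s • vSeq t (k + 1) := rfl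
  have hc0 : c 0 = (1-s) * cos (t k) + s * cos (t (k+1)) := by
    rw [hc]; simp [vSeq]
  have hc1 : c 1 = (1-s) * sin (t k) + s * sin (t (k+1)) := by
    rw [hc]; simp [vSeq]
  ext z
  simp only [Set.mem_setOf_eq, Set.mem_singleton_iff]
  constructor
  · intro hz
    set η := min ((t (k+1) - t k)/4) (min ((t (k+2) - t (k+1))/2)
      (if 2 ≤ k then (t k - t (k-1))/2 else 1)) with hηdef
    have hη0 : 0 < η := by
      refine lt_min (by linarith) (lt_min (by linarith) ?_)
      split_ifs with h2
      · have : t (k-1) < t k := ht.1 (Set.mem_Ici.2 (by omega)) (Set.mem_Ici.2 hk) (by omega)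
        linarith
      · norm_num
    have hη1 : η ≤ (t (k+1) - t k)/4 := min_le_left _ _
    have hη2' : η ≤ (t (k+2) - t (k+1))/2 := le_trans (min_le_right _ _) (min_le_left _ _)
    have hη2 : 2*η ≤ t (k+2) - t (k+1) := by linarith
    have hη3' : η ≤ (if 2 ≤ k then (t k - t (k-1))/2 else 1) :=
      le_trans (min_le_right _ _) (min_le_right _ _)
    have hη3 : 2 ≤ k → 2*η ≤ t k - t (k-1) := by
      intro h2
      rw [if_pos h2] at hη3'
      linarith
    have hA : ∀ u : ℝ, |u| ≤ η →
        ((-1:ℝ)^k * sin u * sin ((t (k+1) - t k)/2)) *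
          (z - ((1 - s) * (-1 : ℝ) ^ k + s * (-1 : ℝ) ^ (k + 1))) ≤ 0 := by
      intro u hu
      have B1 := support t (cos ((t k + t (k+1))/2 + u)) (sin ((t k + t (k+1))/2 + u))
        ((-1)^k * sin u * sin ((t (k+1) - t k)/2)) (cos u * cos ((t (k+1) - t k)/2))
        (key t ht k hk η u hη0 hη1 hη2 hη3 hu) hz
      simp only [Matrix.cons_val_zero, Matrix.cons_val_one, Matrix.head_cons,
        Matrix.cons_val_two, Matrix.tail_cons] at B1
      rw [hc0, hc1] at B1
      have e1 : cos ((t k + t (k+1))/2 + u) * cos (t k) + sin ((t k + t (k+1))/2 + u) * sin (t k)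
          = cos ((t (k+1) - t k)/2 + u) := by
        rw [← Real.cos_sub]; ring_nf
      have e2 : cos ((t k + t (k+1))/2 + u) * cos (t (k+1))
          + sin ((t k + t (k+1))/2 + u) * sin (t (k+1))
          = cos (u - (t (k+1) - t k)/2) := by
        rw [← Real.cos_sub]; ring_nf
      replace e1 := e1.trans (Real.cos_add ((t (k+1) - t k)/2) u)
      replace e2 := e2.trans (Real.cos_sub u ((t (k+1) - t k)/2))
      have hpow : ((-1:ℝ))^(k*2) = 1 := by rw [mul_comm, pow_mul]; norm_num
      have final_eq : ((-1:ℝ)^k * sin u * sin ((t (k+1) - t k)/2)) *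
          (z - ((1 - s) * (-1 : ℝ) ^ k + s * (-1 : ℝ) ^ (k + 1)))
          = cos ((t k + t (k+1))/2 + u) * ((1-s) * cos (t k) + s * cos (t (k+1)))
            + sin ((t k + t (k+1))/2 + u) * ((1-s) * sin (t k) + s * sin (t (k+1)))
            + ((-1)^k * sin u * sin ((t (k+1) - t k)/2)) * z
            - cos u * cos ((t (k+1) - t k)/2) := by
        rw [pow_succ]
        linear_combination (s-1) * e1 - s * e2
          + ((2*s-1) * sin u * sin ((t (k+1) - t k)/2)) * hpow
      linarith [B1, final_eq.le, final_eq.ge]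
    have Gp := hA η (by rw [abs_of_nonneg hη0.le])
    have Gm := hA (-η) (by rw [abs_neg, abs_of_nonneg hη0.le])
    rw [Real.sin_neg] at Gm
    have hsinη : 0 < sin η := Real.sin_pos_of_pos_of_lt_pi hη0 (by nlinarith)
    have hsinδ : 0 < sin ((t (k+1) - t k)/2) :=
      Real.sin_pos_of_pos_of_lt_pi (by linarith) (by nlinarith)
    have hne : ((-1:ℝ)^k * sin η * sin ((t (k+1) - t k)/2)) ≠ 0 :=
      mul_ne_zero (mul_ne_zero (pow_ne_zero _ (by norm_num)) hsinη.ne') hsinδ.ne'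
    have hzero : ((-1:ℝ)^k * sin η * sin ((t (k+1) - t k)/2)) *
        (z - ((1 - s) * (-1 : ℝ) ^ k + s * (-1 : ℝ) ^ (k + 1))) = 0 := by
      nlinarith [Gp, Gm]
    have := (mul_eq_zero.1 hzero).resolve_left hne
    linarith [this]
  · intro hz
    have e0 : ((1 - s) • pSeq t k + s • pSeq t (k+1) : E3) 0
        = (1-s) * cos (t k) + s * cos (t (k+1)) := by simp [pSeq]
    have e1 : ((1 - s) • pSeq t k + s • pSeq t (k+1) : E3) 1
        = (1-s) * sin (t k) + s * sin (t (k+1)) := by simp [pSeq]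
    have e2 : ((1 - s) • pSeq t k + s • pSeq t (k+1) : E3) 2
        = (1-s) * (-1:ℝ)^k + s * (-1:ℝ)^(k+1) := by
      simp [pSeq, Matrix.cons_val_two, Matrix.tail_cons]
    have heq : (WithLp.toLp 2 ![c 0, c 1, z] : E3) = (1 - s) • pSeq t k + s • pSeq t (k+1) := by
      refine PiLp.ext fun i => ?_
      fin_cases i
      · rw [show ((⟨0, by omega⟩ : Fin 3)) = (0 : Fin 3) from rfl]
        simpa [e0] using hc0
      · rw [show ((⟨1, by omega⟩ : Fin 3)) = (1 : Fin 3) from rfl]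
        simpa [e1] using hc1
      · rw [show ((⟨2, by omega⟩ : Fin 3)) = (2 : Fin 3) from rfl]
        simpa [e2] using hz
    rw [heq]
    refine subset_closure ?_
    have hm1 : pSeq t k ∈ convexHull ℝ (pSeq t '' {k | 1 ≤ k}) :=
      subset_convexHull ℝ _ (Set.mem_image_of_mem _ (show k ∈ {k | 1 ≤ k} from hk))
    have hm2 : pSeq t (k+1) ∈ convexHull ℝ (pSeq t '' {k | 1 ≤ k}) :=
      subset_convexHull ℝ _ (Set.mem_image_of_mem _ (show k+1 ∈ {k | 1 ≤ k} by exact le_trans hk (by omega)))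
    exact (convex_convexHull ℝ _) hm1 hm2 (by linarith) hs0 (by ring)
end
end

section
/- For the sets C₁, C₂, C₃ in ℝ³ defined from any admissible sequence (t_k), the set of least-squares solutions S = argmin_{u∈ℝ³} (d(u,C₁)² + d(u,C₂)² + d(u,C₃)²) equals the vertical segment {(0, 5/3, z) : |z| ≤ 1}. -/
noncomputable section
open Real Filter

section Aux

lemma dist_sq_E3 (x y : E3) :
    dist x y ^ 2 = (x 0 - y 0) ^ 2 + (x 1 - y 1) ^ 2 + (x 2 - y 2) ^ 2 := by
  rw [EuclideanSpace.dist_eq, Real.sq_sqrt (by positivity)]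
  simp [Fin.sum_univ_three, Real.dist_eq, sq_abs]

lemma le_infDist' {s : Set E3} (hs : s.Nonempty) {x : E3} {b : ℝ}
    (h : ∀ y ∈ s, b ≤ dist x y) : b ≤ Metric.infDist x s := by
  by_contra hlt
  push_neg at hlt
  obtain ⟨y, hy, hd⟩ := (Metric.infDist_lt_iff hs).mp hlt
  exact absurd (h y hy) (not_le.mpr hd)

lemma mem_C1_prop : ∀ c ∈ C1, c 0 = -2 ∧ c 1 = 2 ∧ |c 2| ≤ 1 := by
  intro c hc
  rw [C1, convexHull_pair, segment_eq_image] at hc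
  obtain ⟨θ, ⟨h0, h1⟩, rfl⟩ := hc
  refine ⟨by simp [PiLp.add_apply, PiLp.smul_apply]; ring,
    by simp [PiLp.add_apply, PiLp.smul_apply]; ring, ?_⟩
  rw [abs_le]
  constructor <;> simp [PiLp.add_apply, PiLp.smul_apply] <;> linarith

lemma mem_C2_prop : ∀ c ∈ C2, c 0 = 2 ∧ c 1 = 2 ∧ |c 2| ≤ 1 := by
  intro c hc
  rw [C2, convexHull_pair, segment_eq_image] at hc
  obtain ⟨θ, ⟨h0, h1⟩, rfl⟩ := hc
  refine ⟨by simp [PiLp.add_apply, PiLp.smul_apply]; ring,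
    by simp [PiLp.add_apply, PiLp.smul_apply]; ring, ?_⟩
  rw [abs_le]
  constructor <;> simp [PiLp.add_apply, PiLp.smul_apply] <;> linarith

lemma mem_C1_s14 (z : ℝ) (hz : |z| ≤ 1) : (WithLp.toLp 2 ![(-2 : ℝ), 2, z] : E3) ∈ C1 := by
  rw [C1, convexHull_pair, segment_eq_image]
  rw [abs_le] at hz
  refine ⟨(1 - z) / 2, ⟨by linarith [hz.1, hz.2], by linarith [hz.1, hz.2]⟩, ?_⟩
  ext i
  fin_cases i <;> simp [PiLp.add_apply, PiLp.smul_apply] <;> ring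

lemma mem_C2_s14 (z : ℝ) (hz : |z| ≤ 1) : (WithLp.toLp 2 ![(2 : ℝ), 2, z] : E3) ∈ C2 := by
  rw [C2, convexHull_pair, segment_eq_image]
  rw [abs_le] at hz
  refine ⟨(1 - z) / 2, ⟨by linarith [hz.1, hz.2], by linarith [hz.1, hz.2]⟩, ?_⟩
  ext i
  fin_cases i <;> simp [PiLp.add_apply, PiLp.smul_apply] <;> ring

lemma C3_coord (t : ℕ → ℝ) : ∀ c ∈ C3 t, c 1 ≤ 1 := by
  have hsub : C3 t ⊆ {c : E3 | c 1 ≤ 1} := by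
    apply closure_minimal
    · apply convexHull_min
      · rintro c ⟨k, -, rfl⟩
        simpa [pSeq] using Real.sin_le_one (t k)
      · exact convex_halfSpace_le ⟨fun a b => rfl, fun c a => rfl⟩ 1
    · exact isClosed_le ((EuclideanSpace.proj (1 : Fin 3) : E3 →L[ℝ] ℝ).continuous)
        continuous_const
  exact fun c hc => hsub hc

lemma lim_mem_C3 (t : ℕ → ℝ) (ht : Admissible t) (z : ℝ) (hz : |z| ≤ 1) :
    (WithLp.toLp 2 ![0, 1, z] : E3) ∈ C3 t := by
  have hmono : ∀ c : ℕ, Tendsto (fun k => 2 * k + c) atTop atTop :=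
    fun c => tendsto_atTop_atTop.mpr fun b => ⟨b, fun a ha => by omega⟩
  have key : ∀ w : ℝ, ∀ c : ℕ, 1 ≤ c → (∀ k, ((-1 : ℝ)) ^ (2 * k + c) = w) →
      (WithLp.toLp 2 ![0, 1, w] : E3) ∈ C3 t := by
    intro w c hc hw
    have ht2 : Tendsto (fun k => t (2 * k + c)) atTop (nhds (π / 2)) :=
      ht.2.2.comp (hmono c)
    rw [C3]
    apply mem_closure_of_tendsto (f := fun k => pSeq t (2 * k + c)) (b := atTop)
    · show Tendsto (fun k => WithLp.toLp 2 ![Real.cos (t (2 * k + c)), Real.sin (t (2 * k + c)),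
          (-1 : ℝ) ^ (2 * k + c)]) atTop (nhds (WithLp.toLp 2 ![0, 1, w]))
      refine ((PiLp.continuous_toLp 2 _).tendsto _).comp ?_
      rw [tendsto_pi_nhds]
      intro i
      fin_cases i
      · have := (Real.continuous_cos.tendsto (π / 2)).comp ht2
        simpa [pSeq, Function.comp_def, Real.cos_pi_div_two] using this
      · have := (Real.continuous_sin.tendsto (π / 2)).comp ht2
        simpa [pSeq, Function.comp_def, Real.sin_pi_div_two] using this
      · simp only [pSeq]
        simpa [hw] using tendsto_const_nhds (x := w) (f := atTop (α := ℕ))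
    · filter_upwards with k
      exact subset_convexHull ℝ _ ⟨2 * k + c, by simp; omega, rfl⟩
  have h1 : (WithLp.toLp 2 ![0, 1, 1] : E3) ∈ C3 t :=
    key 1 2 (by norm_num) fun k => Even.neg_one_pow ⟨k + 1, by ring⟩
  have h2 : (WithLp.toLp 2 ![0, 1, -1] : E3) ∈ C3 t :=
    key (-1) 1 le_rfl fun k => Odd.neg_one_pow ⟨k, by ring⟩
  have hconv : Convex ℝ (C3 t) := (convex_convexHull ℝ _).closure
  have hmem := hconv h1 h2 (a := (1 + z) / 2) (b := (1 - z) / 2)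
    (by rw [abs_le] at hz; linarith [hz.1]) (by rw [abs_le] at hz; linarith [hz.2])
    (by ring)
  convert hmem using 1
  ext i
  fin_cases i <;> simp [PiLp.add_apply, PiLp.smul_apply] <;> ring

lemma C1_lb (x : E3) :
    (x 0 + 2) ^ 2 + (x 1 - 2) ^ 2 + max (|x 2| - 1) 0 ^ 2 ≤ Metric.infDist x C1 ^ 2 := by
  set S := (x 0 + 2) ^ 2 + (x 1 - 2) ^ 2 + max (|x 2| - 1) 0 ^ 2 with hS
  have hS0 : 0 ≤ S := by positivity
  have hb : Real.sqrt S ≤ Metric.infDist x C1 := by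
    apply le_infDist' ⟨_, mem_C1_s14 0 (by norm_num)⟩
    intro c hc
    obtain ⟨h0, h1, h2⟩ := mem_C1_prop c hc
    have hz : max (|x 2| - 1) 0 ^ 2 ≤ (x 2 - c 2) ^ 2 := by
      have h1' : |x 2| - 1 ≤ |x 2 - c 2| := by
        have := abs_sub_abs_le_abs_sub (x 2) (c 2); linarith
      have hm : max (|x 2| - 1) 0 ≤ |x 2 - c 2| := max_le h1' (abs_nonneg _)
      calc max (|x 2| - 1) 0 ^ 2 ≤ |x 2 - c 2| ^ 2 :=
            pow_le_pow_left₀ (le_max_right _ _) hm 2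
        _ = (x 2 - c 2) ^ 2 := sq_abs _
    have hd : S ≤ dist x c ^ 2 := by
      rw [dist_sq_E3, h0, h1, hS]
      have he : (x 0 - -2) ^ 2 = (x 0 + 2) ^ 2 := by ring
      rw [he]; linarith [hz]
    calc Real.sqrt S ≤ Real.sqrt (dist x c ^ 2) := Real.sqrt_le_sqrt hd
      _ = dist x c := by rw [Real.sqrt_sq dist_nonneg]
  calc S = Real.sqrt S ^ 2 := (Real.sq_sqrt hS0).symm
    _ ≤ _ := pow_le_pow_left₀ (Real.sqrt_nonneg _) hb 2

lemma C2_lb (x : E3) :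
    (x 0 - 2) ^ 2 + (x 1 - 2) ^ 2 + max (|x 2| - 1) 0 ^ 2 ≤ Metric.infDist x C2 ^ 2 := by
  set S := (x 0 - 2) ^ 2 + (x 1 - 2) ^ 2 + max (|x 2| - 1) 0 ^ 2 with hS
  have hS0 : 0 ≤ S := by positivity
  have hb : Real.sqrt S ≤ Metric.infDist x C2 := by
    apply le_infDist' ⟨_, mem_C2_s14 0 (by norm_num)⟩
    intro c hc
    obtain ⟨h0, h1, h2⟩ := mem_C2_prop c hc
    have hz : max (|x 2| - 1) 0 ^ 2 ≤ (x 2 - c 2) ^ 2 := by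
      have h1' : |x 2| - 1 ≤ |x 2 - c 2| := by
        have := abs_sub_abs_le_abs_sub (x 2) (c 2); linarith
      have hm : max (|x 2| - 1) 0 ≤ |x 2 - c 2| := max_le h1' (abs_nonneg _)
      calc max (|x 2| - 1) 0 ^ 2 ≤ |x 2 - c 2| ^ 2 :=
            pow_le_pow_left₀ (le_max_right _ _) hm 2
        _ = (x 2 - c 2) ^ 2 := sq_abs _
    have hd : S ≤ dist x c ^ 2 := by rw [dist_sq_E3, h0, h1, hS]; linarith [hz]
    calc Real.sqrt S ≤ Real.sqrt (dist x c ^ 2) := Real.sqrt_le_sqrt hd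
      _ = dist x c := by rw [Real.sqrt_sq dist_nonneg]
  calc S = Real.sqrt S ^ 2 := (Real.sq_sqrt hS0).symm
    _ ≤ _ := pow_le_pow_left₀ (Real.sqrt_nonneg _) hb 2

lemma C3_lb (t : ℕ → ℝ) (x : E3) :
    max (x 1 - 1) 0 ^ 2 ≤ Metric.infDist x (C3 t) ^ 2 := by
  have hb : max (x 1 - 1) 0 ≤ Metric.infDist x (C3 t) := by
    apply le_infDist' (C3_nonempty t)
    intro c hc
    have hc1 : c 1 ≤ 1 := C3_coord t c hc
    have h2 : (x 1 - c 1) ^ 2 ≤ dist x c ^ 2 := by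
      rw [dist_sq_E3]; nlinarith [sq_nonneg (x 0 - c 0), sq_nonneg (x 2 - c 2)]
    have hx : x 1 - 1 ≤ dist x c := by
      nlinarith [dist_nonneg (x := x) (y := c)]
    exact max_le hx dist_nonneg
  exact pow_le_pow_left₀ (le_max_right _ _) hb 2

lemma upper_bound (t : ℕ → ℝ) (ht : Admissible t) (u : E3)
    (h0 : u 0 = 0) (h1 : u 1 = 5 / 3) (h2 : |u 2| ≤ 1) :
    Metric.infDist u C1 ^ 2 + Metric.infDist u C2 ^ 2 + Metric.infDist u (C3 t) ^ 2
      ≤ 26 / 3 := by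
  have d1 : Metric.infDist u C1 ^ 2 ≤ 37 / 9 := by
    have hm := Metric.infDist_le_dist_of_mem (mem_C1_s14 (u 2) h2) (x := u)
    have hd : dist u (WithLp.toLp 2 ![(-2 : ℝ), 2, u 2] : E3) ^ 2 = 37 / 9 := by
      rw [dist_sq_E3]; simp [h0, h1]; norm_num
    have := pow_le_pow_left₀ Metric.infDist_nonneg hm 2
    linarith [this, hd.le, hd.ge]
  have d2 : Metric.infDist u C2 ^ 2 ≤ 37 / 9 := by
    have hm := Metric.infDist_le_dist_of_mem (mem_C2_s14 (u 2) h2) (x := u)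
    have hd : dist u (WithLp.toLp 2 ![(2 : ℝ), 2, u 2] : E3) ^ 2 = 37 / 9 := by
      rw [dist_sq_E3]; simp [h0, h1]; norm_num
    have := pow_le_pow_left₀ Metric.infDist_nonneg hm 2
    linarith [this, hd.le, hd.ge]
  have d3 : Metric.infDist u (C3 t) ^ 2 ≤ 4 / 9 := by
    have hm := Metric.infDist_le_dist_of_mem (lim_mem_C3 t ht (u 2) h2) (x := u)
    have hd : dist u (WithLp.toLp 2 ![(0 : ℝ), 1, u 2] : E3) ^ 2 = 4 / 9 := by
      rw [dist_sq_E3]; simp [h0, h1]; norm_num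
    have := pow_le_pow_left₀ Metric.infDist_nonneg hm 2
    linarith [this, hd.le, hd.ge]
  linarith

end Aux

set_option maxHeartbeats 1000000 in
theorem stmt14 (t : ℕ → ℝ) (ht : Admissible t) :
    {u : E3 | ∀ x : E3,
        Metric.infDist u C1 ^ 2 + Metric.infDist u C2 ^ 2 + Metric.infDist u (C3 t) ^ 2 ≤
        Metric.infDist x C1 ^ 2 + Metric.infDist x C2 ^ 2 + Metric.infDist x (C3 t) ^ 2} =
      {u : E3 | u 0 = 0 ∧ u 1 = 5 / 3 ∧ |u 2| ≤ 1} := by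
  ext u
  simp only [Set.mem_setOf_eq]
  have l1 := C1_lb u
  have l2 := C2_lb u
  have l3 := C3_lb t u
  have hm0 : (0 : ℝ) ≤ max (|u 2| - 1) 0 := le_max_right _ _
  constructor
  · intro h
    have hup := upper_bound t ht (WithLp.toLp 2 ![0, 5 / 3, 0] : E3) (by simp) (by simp) (by simp)
    have hle := (h (WithLp.toLp 2 ![0, 5 / 3, 0] : E3)).trans hup
    have key : (u 0 + 2) ^ 2 + (u 1 - 2) ^ 2 + max (|u 2| - 1) 0 ^ 2 +
        ((u 0 - 2) ^ 2 + (u 1 - 2) ^ 2 + max (|u 2| - 1) 0 ^ 2) +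
        max (u 1 - 1) 0 ^ 2 ≤ 26 / 3 := by linarith
    rcases le_or_gt 1 (u 1) with hb | hb
    · rw [max_eq_left (by linarith : (0 : ℝ) ≤ u 1 - 1)] at key
      have ha2 : u 0 ^ 2 ≤ 0 := by
        nlinarith [sq_nonneg (u 1 - 5 / 3), sq_nonneg (max (|u 2| - 1) 0)]
      have hb2 : (u 1 - 5 / 3) ^ 2 ≤ 0 := by
        nlinarith [sq_nonneg (u 0), sq_nonneg (max (|u 2| - 1) 0)]
      have hm2 : max (|u 2| - 1) 0 ^ 2 ≤ 0 := by
        nlinarith [sq_nonneg (u 0), sq_nonneg (u 1 - 5 / 3)]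
      refine ⟨?_, ?_, ?_⟩
      · exact pow_eq_zero_iff two_ne_zero |>.mp (le_antisymm ha2 (sq_nonneg _))
      · have := pow_eq_zero_iff two_ne_zero |>.mp (le_antisymm hb2 (sq_nonneg _))
        linarith [sub_eq_zero.mp this]
      · have hm := pow_eq_zero_iff two_ne_zero |>.mp (le_antisymm hm2 (sq_nonneg _))
        have := le_max_left (|u 2| - 1) 0
        linarith
    · exfalso
      have hfac : (0 : ℝ) < (1 - u 1) * (3 - u 1) :=
        mul_pos (by linarith) (by linarith)
      nlinarith [sq_nonneg (u 0), sq_nonneg (max (|u 2| - 1) 0),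
        sq_nonneg (max (u 1 - 1) 0)]
  · rintro ⟨h0, h1, h2⟩ x
    have hup := upper_bound t ht u h0 h1 h2
    have l1x := C1_lb x
    have l2x := C2_lb x
    have l3x := C3_lb t x
    have hlow : 26 / 3 ≤ Metric.infDist x C1 ^ 2 + Metric.infDist x C2 ^ 2 +
        Metric.infDist x (C3 t) ^ 2 := by
      rcases le_or_gt 1 (x 1) with hb | hb
      · rw [max_eq_left (by linarith : (0 : ℝ) ≤ x 1 - 1)] at l3x
        nlinarith [sq_nonneg (x 0), sq_nonneg (max (|x 2| - 1) 0),
          sq_nonneg (x 1 - 5 / 3)]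
      · have hfac : (0 : ℝ) < (1 - x 1) * (3 - x 1) :=
          mul_pos (by linarith) (by linarith)
        nlinarith [sq_nonneg (x 0), sq_nonneg (max (|x 2| - 1) 0),
          sq_nonneg (max (x 1 - 1) 0)]
    linarith
end
end
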